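/- arXiv:0905.1971 — 5 statements merged into one kernel-verified Lean document; each statement's English description precedes it below -/
import Mathlib

section
/- Let f : ℝ → ℝ be twice continuously differentiable. Define φ²(t,a) := (2πt)^{-1/2} · exp( (a − f(t))²/(2t) − (1/2)∫₀ᵗ f′(u)² du + f′(t)·a ) for t > 0 and a ∈ ℝ. Then φ² solves the backward Schrödinger equation with time-dependent linear potential: for all t > 0 and a ∈ ℝ, −∂_t φ²(t,a) = (1/2) ∂²_{aa} φ²(t,a) − a·f″(t)·φ²(t,a). -/
/-- The function
`φ²(t,a) = (2πt)^{-1/2} · exp((a − f(t))²/(2t) − (1/2)∫₀ᵗ f′(u)² du + f′(t)·a)`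
solves the backward Schrödinger equation with time-dependent linear potential:
`−∂_t φ²(t,a) = (1/2) ∂²_{aa} φ²(t,a) − a·f″(t)·φ²(t,a)` for all `t > 0`, `a ∈ ℝ`. -/
theorem stmt_0 (f : ℝ → ℝ) (hf : ContDiff ℝ 2 f)
    (φ₂ : ℝ → ℝ → ℝ)
    (hφ₂ : ∀ t a : ℝ, 0 < t →
      φ₂ t a = (2 * Real.pi * t) ^ (-(1:ℝ)/2) *
        Real.exp ((a - f t) ^ 2 / (2 * t)
          - (1/2) * (∫ u in (0:ℝ)..t, (deriv f u) ^ 2) + deriv f t * a)) :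
    ∀ t a : ℝ, 0 < t →
      -(deriv (fun t' => φ₂ t' a) t) =
        (1/2) * deriv (deriv (fun a' => φ₂ t a')) a
          - a * deriv (deriv f) t * φ₂ t a := by
  intro t a ht
  -- basic differentiability facts
  have hf1 : Differentiable ℝ f := hf.differentiable (by norm_num)
  have hfc1 : ContDiff ℝ 1 (deriv f) := by
    have h : ContDiff ℝ (↑(1+1)) f := by exact_mod_cast hf
    simpa using h.iterate_deriv' 1 1
  have hf2 : ∀ x, HasDerivAt (deriv f) (deriv (deriv f) x) x := fun x =>
    ((hfc1.differentiable (by norm_num)) x).hasDerivAt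
  have hfd : ∀ x, HasDerivAt f (deriv f x) x := fun x => (hf1 x).hasDerivAt
  have hfc : Continuous (deriv f) := hfc1.continuous
  have hIc : Continuous fun u => (deriv f u) ^ 2 := hfc.pow 2
  -- abbreviations
  set F := deriv f t with hF
  set F2 := deriv (deriv f) t with hF2
  set C : ℝ → ℝ := fun s => (2*Real.pi*s) ^ (-(1:ℝ)/2) with hCdef
  set g : ℝ → ℝ → ℝ := fun s b => (b - f s) ^ 2 / (2*s)
      - (1/2) * (∫ u in (0:ℝ)..s, (deriv f u) ^ 2) + deriv f s * b with hgdef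
  have hphi : ∀ s b : ℝ, 0 < s → φ₂ s b = C s * Real.exp (g s b) := fun s b hs => hφ₂ s b hs
  have h2πt : (0:ℝ) < 2*Real.pi*t := by positivity
  have htne : t ≠ 0 := ht.ne'
  -- derivative of C at t
  have hC : HasDerivAt C (C t * (-1/(2*t))) t := by
    have hmul : HasDerivAt (fun s : ℝ => 2*Real.pi*s) (2*Real.pi) t := by
      simpa using (hasDerivAt_id t).const_mul (2*Real.pi)
    have hr := (Real.hasDerivAt_rpow_const (p := -(1:ℝ)/2) (Or.inl h2πt.ne')).comp t hmul
    refine hr.congr_deriv ?_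
    rw [show -(1:ℝ)/2 - 1 = -(1:ℝ)/2 + (-1) by ring, Real.rpow_add h2πt, Real.rpow_neg_one]
    field_simp [hCdef]
    simp only [hCdef]; ring_nf
  -- derivative of g in the time variable at t
  have hI : HasDerivAt (fun s => ∫ u in (0:ℝ)..s, (deriv f u) ^ 2) (F ^ 2) t :=
    (hIc.integral_hasStrictDerivAt 0 t).hasDerivAt
  have hu : HasDerivAt (fun s => (a - f s) ^ 2) (2 * (a - f t) * (0 - F)) t := by
    have := ((hasDerivAt_const t a).sub (hfd t)).pow 2
    exact this.congr_deriv (by simp only [Pi.sub_apply]; push_cast; ring)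
  have hv : HasDerivAt (fun s : ℝ => 2 * s) 2 t := by
    simpa using (hasDerivAt_id t).const_mul (2:ℝ)
  have hdiv : HasDerivAt (fun s => (a - f s) ^ 2 / (2*s))
      ((2 * (a - f t) * (0 - F) * (2*t) - (a - f t) ^ 2 * 2) / (2*t) ^ 2) t :=
    hu.div hv (by positivity)
  have hgt : HasDerivAt (fun s => g s a)
      ((2 * (a - f t) * (0 - F) * (2*t) - (a - f t) ^ 2 * 2) / (2*t) ^ 2
        - (1/2) * F ^ 2 + F2 * a) t := by
    exact (hdiv.sub (hI.const_mul (1/2))).add ((hf2 t).mul_const a)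
  -- time derivative of φ₂ (· ) a
  set Gt := (2 * (a - f t) * (0 - F) * (2*t) - (a - f t) ^ 2 * 2) / (2*t) ^ 2
        - (1/2) * F ^ 2 + F2 * a with hGt
  set E := Real.exp (g t a) with hE
  have hT : HasDerivAt (fun s => C s * Real.exp (g s a))
      (C t * (-1/(2*t)) * E + C t * (E * Gt)) t := hC.mul hgt.exp
  have hderivT : deriv (fun t' => φ₂ t' a) t = C t * (-1/(2*t)) * E + C t * (E * Gt) := by
    have hev : (fun t' => φ₂ t' a) =ᶠ[nhds t] fun s => C s * Real.exp (g s a) := by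
      filter_upwards [eventually_gt_nhds ht] with s hs
      exact hphi s a hs
    rw [hev.deriv_eq]
    exact hT.deriv
  -- derivatives in the space variable
  have hgb : ∀ b : ℝ, HasDerivAt (fun b' => C t * Real.exp (g t b'))
      (C t * Real.exp (g t b) * ((b - f t)/t + F)) b := by
    intro b
    have h1 : HasDerivAt (fun b' : ℝ => (b' - f t) ^ 2 / (2*t))
        (2 * (b - f t) * 1 / (2*t)) b := by
      have := (((hasDerivAt_id b).sub_const (f t)).pow 2).div_const (2*t)
      simpa using this
    have h2 : HasDerivAt (fun b' => g t b') (2 * (b - f t) * 1 / (2*t) + F) b := by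
      have := (h1.sub_const ((1/2) * (∫ u in (0:ℝ)..t, (deriv f u) ^ 2))).add
        ((hasDerivAt_id b).const_mul F)
      exact this.congr_deriv (by ring)
    have := (h2.exp).const_mul (C t)
    refine this.congr_deriv ?_
    field_simp
  have hQ : (fun a' => φ₂ t a') = fun b => C t * Real.exp (g t b) := by
    funext b; exact hphi t b ht
  have hd1 : deriv (fun a' => φ₂ t a') =
      fun b => C t * Real.exp (g t b) * ((b - f t)/t + F) := by
    funext b
    rw [hQ]
    exact (hgb b).deriv
  have hd2 : HasDerivAt (fun b => C t * Real.exp (g t b) * ((b - f t)/t + F))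
      (C t * E * ((a - f t)/t + F) * ((a - f t)/t + F) + C t * E * (1/t)) a := by
    have hr : HasDerivAt (fun b : ℝ => (b - f t)/t + F) (1/t) a := by
      have := (((hasDerivAt_id a).sub_const (f t)).div_const t).add_const F
      simpa using this
    have := (hgb a).mul hr
    exact this
  have hderivA : deriv (deriv (fun a' => φ₂ t a')) a =
      C t * E * ((a - f t)/t + F) * ((a - f t)/t + F) + C t * E * (1/t) := by
    rw [hd1]
    exact hd2.deriv
  -- conclude by algebra
  rw [hderivT, hderivA, hphi t a ht, ← hE, hGt]
  field_simp
  ring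
end

section
/- Let f : ℝ → ℝ be twice continuously differentiable. Define ψ̃²(τ,b) := (2πτ)^{-1/2} · exp( −(b − f(τ))²/(2τ) + (1/2)∫₀^τ f′(u)² du − f′(τ)·b ) for τ > 0 and b ∈ ℝ. Then ψ̃² solves the forward Schrödinger equation with time-dependent linear potential: for all τ > 0 and b ∈ ℝ, ∂_τ ψ̃²(τ,b) = (1/2) ∂²_{bb} ψ̃²(τ,b) − b·f″(τ)·ψ̃²(τ,b). -/
open Real

/-- The function
`ψ̃²(τ,b) = (2πτ)^{-1/2} · exp(−(b − f(τ))²/(2τ) + (1/2)∫₀^τ f′(u)² du − f′(τ)·b)`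
solves the forward Schrödinger equation with time-dependent linear potential:
`∂_τ ψ̃²(τ,b) = (1/2) ∂²_{bb} ψ̃²(τ,b) − b·f″(τ)·ψ̃²(τ,b)` for all `τ > 0`, `b ∈ ℝ`. -/
theorem stmt_1 (f : ℝ → ℝ) (hf : ContDiff ℝ 2 f)
    (ψ₂ : ℝ → ℝ → ℝ)
    (hψ₂ : ∀ τ b : ℝ, 0 < τ →
      ψ₂ τ b = (2 * Real.pi * τ) ^ (-(1:ℝ)/2) *
        Real.exp (-(b - f τ) ^ 2 / (2 * τ)
          + (1/2) * (∫ u in (0:ℝ)..τ, (deriv f u) ^ 2) - deriv f τ * b)) :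
    ∀ τ b : ℝ, 0 < τ →
      deriv (fun τ' => ψ₂ τ' b) τ =
        (1/2) * deriv (deriv (fun b' => ψ₂ τ b')) b
          - b * deriv (deriv f) τ * ψ₂ τ b := by
  intro τ b hτ
  have hfd : Differentiable ℝ f := hf.differentiable (by norm_num)
  have hf1 : ContDiff ℝ 1 (deriv f) :=
    ((contDiff_succ_iff_deriv (n := 1)).mp (by exact_mod_cast hf)).2.2
  have hf'd : Differentiable ℝ (deriv f) := hf1.differentiable (by norm_num)
  have hf'c : Continuous (deriv f) := hf'd.continuous
  set Φ : ℝ → ℝ → ℝ := fun t x => Real.exp (Real.log (2 * Real.pi * t) * (-(1:ℝ)/2) +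
      (-(x - f t) ^ 2 / (2 * t) + (1/2) * (∫ u in (0:ℝ)..t, (deriv f u) ^ 2)
        - deriv f t * x)) with hΦ
  have hπτ : (0:ℝ) < 2 * Real.pi * τ := by positivity
  have hψΦ : ∀ t x : ℝ, 0 < t → ψ₂ t x = Φ t x := by
    intro t x ht
    rw [hψ₂ t x ht, hΦ, Real.rpow_def_of_pos (by positivity), ← Real.exp_add]
  -- first b-derivative
  have hbd : ∀ x : ℝ, HasDerivAt (fun x' => Φ τ x')
      (Φ τ x * (-(x - f τ) / τ - deriv f τ)) x := by
    intro x
    have h1 : HasDerivAt (fun x' : ℝ => Real.log (2 * Real.pi * τ) * (-(1:ℝ)/2) +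
        (-(x' - f τ) ^ 2 / (2 * τ) + (1/2) * (∫ u in (0:ℝ)..τ, (deriv f u) ^ 2)
          - deriv f τ * x'))
        (-((2:ℕ) * (x - f τ) ^ (2-1) * 1) / (2 * τ) - deriv f τ * 1) x :=
      (((((hasDerivAt_id x).sub_const (f τ)).pow 2).neg.div_const (2 * τ)).add_const
        ((1/2) * (∫ u in (0:ℝ)..τ, (deriv f u) ^ 2))|>.sub
          ((hasDerivAt_id x).const_mul (deriv f τ))).const_add _
    have h2 := h1.exp
    simp only [hΦ]
    convert h2 using 1
    push_cast
    field_simp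
  have hderiv1 : (deriv fun x' => Φ τ x') = fun x => Φ τ x * (-(x - f τ) / τ - deriv f τ) :=
    funext fun x => (hbd x).deriv
  -- second b-derivative
  have hlin : HasDerivAt (fun x : ℝ => -(x - f τ) / τ - deriv f τ) (-1 / τ) b := by
    have := (((hasDerivAt_id b).sub_const (f τ)).neg.div_const τ).sub_const (deriv f τ)
    simpa using this
  have hbd2 : HasDerivAt (fun x => Φ τ x * (-(x - f τ) / τ - deriv f τ))
      (Φ τ b * (-(b - f τ) / τ - deriv f τ) * (-(b - f τ) / τ - deriv f τ)
        + Φ τ b * (-1 / τ)) b := (hbd b).mul hlin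
  have hb2 : deriv (deriv (fun b' => ψ₂ τ b')) b =
      Φ τ b * (-(b - f τ) / τ - deriv f τ) * (-(b - f τ) / τ - deriv f τ)
        + Φ τ b * (-1 / τ) := by
    have hfun : (fun b' => ψ₂ τ b') = fun b' => Φ τ b' := funext fun x => hψΦ τ x hτ
    rw [hfun, hderiv1, hbd2.deriv]
  -- τ-derivative
  have hK : HasDerivAt (fun t => ∫ u in (0:ℝ)..t, (deriv f u) ^ 2) ((deriv f τ)^2) τ := by
    have hcont : Continuous fun u => (deriv f u) ^ 2 := hf'c.pow 2
    exact intervalIntegral.integral_hasDerivAt_right (hcont.intervalIntegrable _ _)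
      (hcont.stronglyMeasurableAtFilter _ _) hcont.continuousAt
  have hlog : HasDerivAt (fun t : ℝ => Real.log (2 * Real.pi * t) * (-(1:ℝ)/2))
      ((2 * Real.pi * τ)⁻¹ * (2 * Real.pi) * (-(1:ℝ)/2)) τ := by
    have hlin2 : HasDerivAt (fun t : ℝ => 2 * Real.pi * t) (2 * Real.pi) τ := by
      simpa using (hasDerivAt_id τ).const_mul (2 * Real.pi)
    exact ((Real.hasDerivAt_log hπτ.ne').comp τ hlin2).mul_const _
  have hnum : HasDerivAt (fun t : ℝ => -(b - f t) ^ 2)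
      (-((2:ℕ) * (b - f τ) ^ (2-1) * (0 - deriv f τ))) τ :=
    (((hasDerivAt_const τ b).sub (hfd τ).hasDerivAt).pow 2).neg
  have hden : HasDerivAt (fun t : ℝ => 2 * t) (2:ℝ) τ := by
    simpa using (hasDerivAt_id τ).const_mul (2:ℝ)
  have hfrac := hnum.div hden (by positivity : (2 * τ : ℝ) ≠ 0)
  have ht4 : HasDerivAt (fun t => deriv f t * b) (deriv (deriv f) τ * b) τ :=
    ((hf'd τ).hasDerivAt).mul_const b
  have hτd := (hlog.add ((hfrac.add (hK.const_mul (1/2))).sub ht4)).exp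
  have heq : (fun τ' => ψ₂ τ' b) =ᶠ[nhds τ] (fun τ' => Φ τ' b) := by
    filter_upwards [Ioi_mem_nhds hτ] with t ht using hψΦ t b ht
  rw [heq.deriv_eq, hb2, hψΦ τ b hτ]
  simp only [hΦ] at hτd ⊢
  simp only [Pi.add_apply, Pi.sub_apply, Pi.div_apply] at hτd
  rw [hτd.deriv]
  push_cast
  have hτ0 : (τ:ℝ) ≠ 0 := hτ.ne'
  field_simp
  ring
end

section
/- Let f : ℝ → ℝ be twice continuously differentiable. For 0 ≤ t < τ and a, b ∈ ℝ define H(t,a;τ,b) := (2π(τ−t))^{-1/2} · exp( (1/2)∫_t^τ f′(u)² du − f′(τ)·b + f′(t)·a ) · [ exp( −(b − a − ∫_t^τ f′(u) du)²/(2(τ−t)) ) − exp( −(b + a − ∫_t^τ f′(u) du)²/(2(τ−t)) ) ]. Then for every τ > 0, every a > 0, and every bounded continuous function g : [0,∞) → ℝ, the integral ∫₀^∞ H(t,a;τ,b)·g(b) db converges to g(a) as t → τ from the left. -/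
open MeasureTheory Real Filter

lemma stmt12_sub (s μ : ℝ) (hs : 0 < s) (Φ : ℝ → ℝ) :
    ∫ b, Φ b = s * ∫ z, Φ (μ + s * z) := by
  have h1 : (∫ z, (fun y => Φ (μ + y)) (s * z)) = |s⁻¹| • ∫ y, Φ (μ + y) :=
    MeasureTheory.Measure.integral_comp_mul_left (fun y => Φ (μ + y)) s
  have h2 : (∫ y : ℝ, Φ (μ + y)) = ∫ y, Φ y := integral_add_left_eq_self (fun y => Φ y) μ
  rw [h2] at h1
  rw [show (∫ z, Φ (μ + s * z)) = ∫ z, (fun y => Φ (μ + y)) (s * z) from rfl, h1,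
    abs_of_pos (inv_pos.2 hs), smul_eq_mul]
  field_simp

lemma stmt12_gauss : (∫ z : ℝ, (2*Real.pi)^(-(1:ℝ)/2) * Real.exp (-z^2/2)) = 1 := by
  have h2 : (∫ z : ℝ, Real.exp (-z^2/2)) = Real.sqrt (2*Real.pi) := by
    have h : (∫ z : ℝ, Real.exp (-(1/2 : ℝ) * z^2)) = Real.sqrt (Real.pi / (1/2)) :=
      integral_gaussian (1/2)
    rw [show (Real.pi / (1/2)) = 2*Real.pi by ring] at h
    rw [← h]; congr 1; funext z; ring_nf
  rw [MeasureTheory.integral_const_mul, h2,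
    show (-(1:ℝ)/2) = -(1/2 : ℝ) by norm_num, Real.rpow_neg (by positivity),
    ← Real.sqrt_eq_rpow]
  rw [inv_mul_cancel₀ (Real.sqrt_ne_zero'.2 (by positivity))]

set_option maxHeartbeats 1000000 in
/-- With `H(t,a;τ,b)` as in the paper, for every `τ > 0`, every `a > 0`, and
every bounded continuous function `g : [0,∞) → ℝ`, the integral `∫₀^∞ H(t,a;τ,b)·g(b) db`
converges to `g(a)` as `t → τ⁻` with `0 ≤ t < τ`. -/
theorem stmt_12 (f : ℝ → ℝ) (hf : ContDiff ℝ 2 f)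
    (H : ℝ → ℝ → ℝ → ℝ → ℝ)
    (hH : ∀ t a τ b : ℝ, 0 ≤ t → t < τ →
      H t a τ b = (2 * Real.pi * (τ - t)) ^ (-(1:ℝ)/2) *
        Real.exp ((1/2) * (∫ u in t..τ, (deriv f u) ^ 2) - deriv f τ * b + deriv f t * a) *
        (Real.exp (-(b - a - ∫ u in t..τ, deriv f u) ^ 2 / (2 * (τ - t)))
          - Real.exp (-(b + a - ∫ u in t..τ, deriv f u) ^ 2 / (2 * (τ - t)))))
    (τ : ℝ) (hτ : 0 < τ) (a : ℝ) (ha : 0 < a)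
    (g : ℝ → ℝ) (hg : ContinuousOn g (Set.Ici 0))
    (hgb : ∃ M : ℝ, ∀ b ∈ Set.Ici (0:ℝ), |g b| ≤ M) :
    Filter.Tendsto (fun t => ∫ b in Set.Ioi (0:ℝ), H t a τ b * g b)
      (nhdsWithin τ (Set.Ico 0 τ)) (nhds (g a)) := by
  classical
  obtain ⟨M, hM⟩ := hgb
  set l := nhdsWithin τ (Set.Ico 0 τ) with hldef
  have hsub : l ≤ nhds τ := nhdsWithin_le_nhds
  have hf'c : Continuous (deriv f) := hf.continuous_deriv one_le_two
  -- extended g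
  set G : ℝ → ℝ := fun y => g (max y 0) with hGdef
  have hGc : Continuous G :=
    hg.comp_continuous (continuous_id.max continuous_const) fun x => Set.mem_Ici.2 (le_max_right _ _)
  have hGg : ∀ y : ℝ, 0 ≤ y → G y = g y := fun y hy => by
    simp only [hGdef]; rw [max_eq_left hy]
  have hGbd : ∀ y : ℝ, |G y| ≤ M := fun y => hM _ (Set.mem_Ici.2 (le_max_right _ _))
  have hM0 : 0 ≤ M := (abs_nonneg _).trans (hGbd 0)
  -- interval integrability
  have hint1 : ∀ p q : ℝ, IntervalIntegrable (deriv f) volume p q :=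
    fun p q => hf'c.intervalIntegrable p q
  have hint2 : ∀ p q : ℝ, IntervalIntegrable (fun u => (deriv f u)^2) volume p q :=
    fun p q => (hf'c.pow 2).intervalIntegrable p q
  -- m and c
  set m : ℝ → ℝ := fun t => ∫ u in t..τ, deriv f u with hmdef
  set c : ℝ → ℝ := fun t => (1/2 : ℝ) * ∫ u in t..τ, (deriv f u)^2 with hcdef
  have hmc : Continuous m := by
    have h1 : Continuous fun t => ∫ u in (0:ℝ)..t, deriv f u :=
      intervalIntegral.continuous_primitive hint1 0
    refine Continuous.congr (f := fun t => (∫ u in (0:ℝ)..τ, deriv f u) - ∫ u in (0:ℝ)..t, deriv f u)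
      (continuous_const.sub h1) fun t => ?_
    simp only [hmdef]
    rw [eq_comm, eq_sub_iff_add_eq, add_comm]
    exact intervalIntegral.integral_add_adjacent_intervals (hint1 0 t) (hint1 t τ)
  have hcc : Continuous c := by
    have h1 : Continuous fun t => ∫ u in (0:ℝ)..t, (deriv f u)^2 :=
      intervalIntegral.continuous_primitive hint2 0
    refine Continuous.congr
      (f := fun t => (1/2 : ℝ) * ((∫ u in (0:ℝ)..τ, (deriv f u)^2) - ∫ u in (0:ℝ)..t, (deriv f u)^2))
      (continuous_const.mul (continuous_const.sub h1)) fun t => ?_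
    simp only [hcdef]
    congr 1
    rw [eq_comm, eq_sub_iff_add_eq, add_comm]
    exact intervalIntegral.integral_add_adjacent_intervals (hint2 0 t) (hint2 t τ)
  have hmτ : m τ = 0 := by simp [hmdef]
  have hcτ : c τ = 0 := by simp [hcdef]
  -- s
  set s : ℝ → ℝ := fun t => Real.sqrt (τ - t) with hsdef
  -- Q and F
  set Q : ℝ → ℝ → ℝ := fun t z =>
    (2*Real.pi)^(-(1:ℝ)/2) *
      Real.exp (c t - deriv f τ * (a + m t + s t * z) + deriv f t * a) *
      (Real.exp (-z^2/2) - Real.exp (-(2*a + s t * z)^2 / (2*(τ - t)))) *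
      G (a + m t + s t * z) with hQdef
  set F : ℝ → ℝ → ℝ := fun t z =>
    Set.indicator {z : ℝ | 0 < a + m t + s t * z} (Q t) z with hFdef
  -- Claim A : change of variables
  have claimA : ∀ t : ℝ, 0 ≤ t → t < τ →
      (∫ b in Set.Ioi (0:ℝ), H t a τ b * g b) = ∫ z, F t z := by
    intro t ht0 htτ
    have he : 0 < τ - t := sub_pos.2 htτ
    have hs0 : 0 < s t := Real.sqrt_pos.2 he
    have hsq : s t ^ 2 = τ - t := Real.sq_sqrt he.le
    set Φ : ℝ → ℝ := fun b => Set.indicator (Set.Ioi (0:ℝ)) (fun b => H t a τ b * g b) b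
      with hΦdef
    have e1 : (∫ b in Set.Ioi (0:ℝ), H t a τ b * g b) = ∫ b, Φ b :=
      (MeasureTheory.integral_indicator measurableSet_Ioi).symm
    have e2 : (∫ b, Φ b) = s t * ∫ z, Φ (a + m t + s t * z) :=
      stmt12_sub (s t) (a + m t) hs0 Φ
    have e3 : ∀ z : ℝ, s t * Φ (a + m t + s t * z) = F t z := by
      intro z
      by_cases hz : 0 < a + m t + s t * z
      · rw [hΦdef]
        simp only []
        rw [Set.indicator_of_mem (by exact hz : (a + m t + s t * z) ∈ Set.Ioi (0:ℝ))]
        simp only [hFdef]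
        rw [Set.indicator_of_mem (by exact hz : z ∈ {z : ℝ | 0 < a + m t + s t * z})]
        rw [hH t a τ (a + m t + s t * z) ht0 htτ]
        simp only [hQdef]
        have hmt : (∫ u in t..τ, deriv f u) = m t := rfl
        have hct : (1/2 : ℝ) * ∫ u in t..τ, (deriv f u)^2 = c t := rfl
        rw [hmt, hct]
        rw [show a + m t + s t * z - a - m t = s t * z by ring,
          show a + m t + s t * z + a - m t = 2*a + s t * z by ring]
        have hq : -(s t * z)^2/(2*(τ-t)) = -z^2/2 := by
          rw [mul_pow, hsq]; field_simp
        rw [hq]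
        have h2 : (τ - t : ℝ)^(-(1:ℝ)/2) = (s t)⁻¹ := by
          rw [show (-(1:ℝ)/2) = -(1/2:ℝ) by norm_num, Real.rpow_neg he.le,
            ← Real.sqrt_eq_rpow]
        rw [Real.mul_rpow (by positivity) he.le, h2, ← hGg _ hz.le]
        field_simp
      · rw [hΦdef]
        simp only []
        rw [Set.indicator_of_notMem (by simpa using hz), mul_zero]
        simp only [hFdef]
        rw [Set.indicator_of_notMem (by exact hz : z ∉ {z : ℝ | 0 < a + m t + s t * z})]
    rw [e1, e2, ← MeasureTheory.integral_const_mul]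
    exact MeasureTheory.integral_congr_ae (Eventually.of_forall e3)
  -- filter limits
  have hmem : ∀ᶠ t in l, t ∈ Set.Ico 0 τ := self_mem_nhdsWithin
  have htlt : Tendsto (fun t : ℝ => τ - t) l (nhds 0) := by
    have h0 : Continuous fun t : ℝ => τ - t := continuous_const.sub continuous_id
    have := (h0.tendsto τ).mono_left hsub
    simpa using this
  have hsl : Tendsto s l (nhds 0) := by
    have := (Real.continuous_sqrt.tendsto 0).comp htlt
    simpa [hsdef, Function.comp_def] using this
  have hml : Tendsto m l (nhds 0) := by
    have := (hmc.tendsto τ).mono_left hsub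
    rwa [hmτ] at this
  have hcl : Tendsto c l (nhds 0) := by
    have := (hcc.tendsto τ).mono_left hsub
    rwa [hcτ] at this
  have hdl : Tendsto (fun t => deriv f t) l (nhds (deriv f τ)) :=
    (hf'c.tendsto τ).mono_left hsub
  -- constant K
  obtain ⟨K, hK1, hKb⟩ : ∃ K : ℝ, 1 ≤ K ∧ ∀ u ∈ Set.Icc 0 τ, |deriv f u| ≤ K := by
    obtain ⟨K₀, hK₀⟩ :=
      (isCompact_Icc : IsCompact (Set.Icc (0:ℝ) τ)).exists_bound_of_continuousOn hf'c.continuousOn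
    exact ⟨max K₀ 1, le_max_right _ _, fun u hu =>
      le_trans (by simpa [Real.norm_eq_abs] using hK₀ u hu) (le_max_left _ _)⟩
  -- dominating function
  set C₂ : ℝ := 2 * M * (2*Real.pi)^(-(1:ℝ)/2) * Real.exp (1 + 3*K*a + 64*K^2) with hC2def
  have hC₂0 : 0 ≤ C₂ := by positivity
  set h : ℝ → ℝ := fun z => C₂ * Real.exp (-(1/256) * z^2) with hhdef
  have hhint : Integrable h := by
    exact (integrable_exp_neg_mul_sq (by norm_num : (0:ℝ) < 1/256)).const_mul C₂
  -- measurability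
  have hmeas : ∀ t : ℝ, AEStronglyMeasurable (F t) volume := by
    intro t
    simp only [hFdef]
    apply AEStronglyMeasurable.indicator
    · apply Continuous.aestronglyMeasurable
      simp only [hQdef]
      fun_prop
    · exact (isOpen_lt continuous_const (by fun_prop)).measurableSet
  -- bound
  have hb1 : ∀ᶠ t in l, |m t| ≤ a/2 := by
    have h0 := hml
    rw [Metric.tendsto_nhds] at h0
    filter_upwards [h0 (a/2) (by positivity)] with t ht
    rw [Real.dist_eq, sub_zero] at ht; exact ht.le
  have hb2 : ∀ᶠ t in l, c t ≤ 1 := by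
    have h0 := hcl
    rw [Metric.tendsto_nhds] at h0
    filter_upwards [h0 1 one_pos] with t ht
    rw [Real.dist_eq, sub_zero] at ht
    exact (le_abs_self _).trans ht.le
  have hb3 : ∀ᶠ t in l, τ - t ≤ 1 := by
    have h0 := htlt
    rw [Metric.tendsto_nhds] at h0
    filter_upwards [h0 1 one_pos] with t ht
    rw [Real.dist_eq, sub_zero] at ht
    exact (le_abs_self _).trans ht.le
  have hbound : ∀ᶠ t in l, ∀ᵐ z : ℝ, ‖F t z‖ ≤ h z := by
    filter_upwards [hmem, hb1, hb2, hb3] with t htm hm1 hc1 he1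
    refine Eventually.of_forall fun z => ?_
    have ht0 : 0 ≤ t := htm.1
    have htτ : t < τ := htm.2
    have he : 0 < τ - t := sub_pos.2 htτ
    have hs0 : 0 < s t := Real.sqrt_pos.2 he
    have hsq : s t ^ 2 = τ - t := Real.sq_sqrt he.le
    have hs1 : s t ≤ 1 := by
      simp only [hsdef]
      calc Real.sqrt (τ - t) ≤ Real.sqrt 1 := Real.sqrt_le_sqrt he1
        _ = 1 := Real.sqrt_one
    have hK0 : (0:ℝ) ≤ K := zero_le_one.trans hK1
    have hfτ : |deriv f τ| ≤ K := hKb τ ⟨hτ.le, le_refl τ⟩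
    have hft : |deriv f t| ≤ K := hKb t ⟨ht0, htτ.le⟩
    by_cases hz : z ∈ {z : ℝ | 0 < a + m t + s t * z}
    · simp only [hFdef]
      rw [Set.indicator_of_mem hz]
      simp only [hQdef, hhdef]
      have hzs : 0 < a + m t + s t * z := hz
      have hmm := abs_le.1 hm1
      set w := s t * z with hwdef
      have hw1 : -(3*a/2) < w := by linarith [hmm.1]
      have h2aw : a/2 ≤ 2*a + w := by linarith [hmm.1]
      have hwsq : w^2 = (τ - t) * z^2 := by rw [hwdef, mul_pow, hsq]
      have hA : c t - deriv f τ * (a + m t + w) + deriv f t * a ≤ 1 + 3*K*a + K*|z| := by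
        have h1 : - (deriv f τ * (a + m t)) ≤ K * (3*a/2) := by
          have habs : |a + m t| ≤ 3*a/2 := by
            rw [abs_le]; constructor <;> linarith [hmm.1, hmm.2]
          calc - (deriv f τ * (a + m t)) ≤ |deriv f τ * (a + m t)| := neg_le_abs _
            _ = |deriv f τ| * |a + m t| := abs_mul _ _
            _ ≤ K * (3*a/2) := mul_le_mul hfτ habs (abs_nonneg _) hK0
        have h2 : - (deriv f τ * w) ≤ K * |z| := by
          calc - (deriv f τ * w) ≤ |deriv f τ * w| := neg_le_abs _
            _ = |deriv f τ| * (s t * |z|) := by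
                rw [abs_mul, hwdef, abs_mul, abs_of_pos hs0]
            _ ≤ K * (1 * |z|) := by
                refine mul_le_mul hfτ ?_ (by positivity) hK0
                exact mul_le_mul_of_nonneg_right hs1 (abs_nonneg z)
            _ = K * |z| := by ring
        have h3 : deriv f t * a ≤ K * a := by
          calc deriv f t * a ≤ |deriv f t| * a :=
                mul_le_mul_of_nonneg_right (le_abs_self _) ha.le
            _ ≤ K * a := mul_le_mul_of_nonneg_right hft ha.le
        have hsplit : deriv f τ * (a + m t + w)
            = deriv f τ * (a + m t) + deriv f τ * w := by ring
        have hKa : 0 ≤ K * a := mul_nonneg hK0 ha.le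
        linarith [h1, h2, h3, hc1]
      have hE2 : Real.exp (-z^2/2) ≤ Real.exp (-z^2/128) := by
        rw [Real.exp_le_exp]; nlinarith [sq_nonneg z]
      have hE3 : Real.exp (-(2*a + w)^2 / (2*(τ - t))) ≤ Real.exp (-z^2/128) := by
        rw [Real.exp_le_exp]
        have key : z^2/128 ≤ (2*a + w)^2/(2*(τ-t)) := by
          rw [div_le_div_iff₀ (by norm_num) (by positivity)]
          rcases le_or_gt w (4*a) with hw4 | hw4
          · have hwsq2 : w^2 ≤ 16*a^2 := by nlinarith [hw1, hw4, ha]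
            have hsqb : a^2/4 ≤ (2*a+w)^2 := by nlinarith [h2aw, ha]
            nlinarith [he, hwsq, hwsq2, hsqb, sq_nonneg z]
          · nlinarith [he, hwsq, ha, hw4]
        calc -(2*a + w)^2 / (2*(τ-t)) = -((2*a + w)^2 / (2*(τ-t))) := by ring
          _ ≤ -(z^2/128) := neg_le_neg key
          _ = -z^2/128 := by ring
      have hD : |Real.exp (-z^2/2) - Real.exp (-(2*a + w)^2 / (2*(τ - t)))|
          ≤ 2 * Real.exp (-z^2/128) := by
        refine (abs_sub _ _).trans ?_
        rw [abs_of_pos (Real.exp_pos _), abs_of_pos (Real.exp_pos _)]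
        linarith [hE2, hE3]
      have hP : (0:ℝ) < (2*Real.pi)^(-(1:ℝ)/2) := by positivity
      calc ‖(2*Real.pi)^(-(1:ℝ)/2) *
            Real.exp (c t - deriv f τ * (a + m t + w) + deriv f t * a) *
            (Real.exp (-z^2/2) - Real.exp (-(2*a + w)^2 / (2*(τ - t)))) *
            G (a + m t + w)‖
          = (2*Real.pi)^(-(1:ℝ)/2) *
            Real.exp (c t - deriv f τ * (a + m t + w) + deriv f t * a) *
            |Real.exp (-z^2/2) - Real.exp (-(2*a + w)^2 / (2*(τ - t)))| *
            |G (a + m t + w)| := by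
            rw [Real.norm_eq_abs, abs_mul, abs_mul, abs_mul, abs_of_pos hP,
              abs_of_pos (Real.exp_pos _)]
        _ ≤ (2*Real.pi)^(-(1:ℝ)/2) * Real.exp (1 + 3*K*a + K*|z|) *
            (2 * Real.exp (-z^2/128)) * M := by
            have hAe : Real.exp (c t - deriv f τ * (a + m t + w) + deriv f t * a)
                ≤ Real.exp (1 + 3*K*a + K*|z|) := Real.exp_le_exp.2 hA
            gcongr
            exact hGbd _
        _ ≤ C₂ * Real.exp (-(1/256) * z^2) := by
            rw [hC2def]
            have hexp : Real.exp (1 + 3*K*a + K*|z|) * Real.exp (-z^2/128)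
                ≤ Real.exp (1 + 3*K*a + 64*K^2) * Real.exp (-(1/256) * z^2) := by
              rw [← Real.exp_add, ← Real.exp_add, Real.exp_le_exp]
              nlinarith [sq_nonneg (|z|/16 - 8*K), sq_abs z]
            calc (2*Real.pi)^(-(1:ℝ)/2) * Real.exp (1 + 3*K*a + K*|z|) *
                (2 * Real.exp (-z^2/128)) * M
                = 2 * M * (2*Real.pi)^(-(1:ℝ)/2) *
                  (Real.exp (1 + 3*K*a + K*|z|) * Real.exp (-z^2/128)) := by ring
              _ ≤ 2 * M * (2*Real.pi)^(-(1:ℝ)/2) *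
                  (Real.exp (1 + 3*K*a + 64*K^2) * Real.exp (-(1/256) * z^2)) := by
                  refine mul_le_mul_of_nonneg_left hexp (by positivity)
              _ = 2 * M * (2*Real.pi)^(-(1:ℝ)/2) * Real.exp (1 + 3*K*a + 64*K^2) *
                  Real.exp (-(1/256) * z^2) := by ring
    · simp only [hFdef]
      rw [Set.indicator_of_notMem hz]
      simp only [hhdef, norm_zero]
      positivity
  -- pointwise limit
  have hlim : ∀ z : ℝ, Tendsto (fun t => F t z) l
      (nhds ((2*Real.pi)^(-(1:ℝ)/2) * Real.exp (-z^2/2) * g a)) := by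
    intro z
    have t1 : Tendsto (fun t => a + m t + s t * z) l (nhds a) := by
      have h0 : Tendsto (fun t => a + m t + s t * z) l (nhds (a + 0 + 0 * z)) :=
        (tendsto_const_nhds.add hml).add (hsl.mul_const z)
      simpa using h0
    have t2 : Tendsto (fun t => c t - deriv f τ * (a + m t + s t * z) + deriv f t * a) l
        (nhds (0 - deriv f τ * a + deriv f τ * a)) :=
      (hcl.sub (tendsto_const_nhds.mul t1)).add (hdl.mul_const a)
    have t3 : Tendsto
        (fun t => Real.exp (c t - deriv f τ * (a + m t + s t * z) + deriv f t * a)) l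
        (nhds 1) := by
      have h0 := (Real.continuous_exp.tendsto _).comp t2
      rw [show (0 : ℝ) - deriv f τ * a + deriv f τ * a = 0 by ring] at h0
      rw [Real.exp_zero] at h0
      exact h0
    have t4 : Tendsto (fun t => Real.exp (-(2*a + s t * z)^2 / (2*(τ - t)))) l (nhds 0) := by
      have num : Tendsto (fun t => -(2*a + s t * z)^2) l (nhds (-(2*a)^2)) := by
        have h0 : Tendsto (fun t => 2*a + s t * z) l (nhds (2*a + 0*z)) :=
          tendsto_const_nhds.add (hsl.mul_const z)
        have h1 := (h0.pow 2).neg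
        simpa using h1
      have hden : Tendsto (fun t => 2*(τ - t)) l (nhdsWithin 0 (Set.Ioi 0)) := by
        apply tendsto_nhdsWithin_of_tendsto_nhds_of_eventually_within
        · simpa using htlt.const_mul 2
        · exact hmem.mono fun t ht => by
            simp only [Set.mem_Ioi]
            linarith [ht.2]
      have hinv : Tendsto (fun t => (2*(τ - t))⁻¹) l atTop := hden.inv_tendsto_nhdsGT_zero
      have hprod : Tendsto (fun t => -(2*a + s t * z)^2 * (2*(τ - t))⁻¹) l atBot :=
        Filter.Tendsto.neg_mul_atTop (by nlinarith : -(2*a)^2 < 0) num hinv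
      have h2 := Real.tendsto_exp_atBot.comp hprod
      refine h2.congr fun t => ?_
      simp [div_eq_mul_inv]
    have t5 : Tendsto (fun t => G (a + m t + s t * z)) l (nhds (g a)) := by
      have h0 := (hGc.tendsto a).comp t1
      rwa [hGg a ha.le] at h0
    have hQlim : Tendsto (fun t => Q t z) l
        (nhds ((2*Real.pi)^(-(1:ℝ)/2) * Real.exp (-z^2/2) * g a)) := by
      simp only [hQdef]
      have h0 := (((tendsto_const_nhds (x := (2*Real.pi)^(-(1:ℝ)/2))).mul t3).mul
        ((tendsto_const_nhds (x := Real.exp (-z^2/2))).sub t4)).mul t5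
      simpa only [mul_one, sub_zero] using h0
    have hev : ∀ᶠ t in l, F t z = Q t z := by
      filter_upwards [t1.eventually (eventually_gt_nhds ha)] with t ht
      simp only [hFdef]
      exact Set.indicator_of_mem (by exact ht : z ∈ {z : ℝ | 0 < a + m t + s t * z}) (Q t)
    exact hQlim.congr' (hev.mono fun t ht => ht.symm)
  have key := MeasureTheory.tendsto_integral_filter_of_dominated_convergence
    (μ := volume) h (Eventually.of_forall hmeas) hbound hhint
    (Eventually.of_forall hlim)
  have hInt : (∫ z : ℝ, (2*Real.pi)^(-(1:ℝ)/2) * Real.exp (-z^2/2) * g a) = g a := by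
    rw [MeasureTheory.integral_mul_const, stmt12_gauss, one_mul]
  rw [hInt] at key
  exact Filter.Tendsto.congr' (hmem.mono fun t ht => (claimA t ht.1 ht.2).symm) key
end

section
/- Let f : ℝ → ℝ be twice continuously differentiable and let s > 0. For a > 0 and r > 0 define φ_a(r) := (a/√(2πr³)) · exp(−a²/(2r)). For 0 ≤ t < τ and a, b ∈ ℝ define H(t,a;τ,b) := (2π(τ−t))^{-1/2} · exp( (1/2)∫_t^τ f′(u)² du − f′(τ)·b + f′(t)·a ) · [ exp( −(b − a − ∫_t^τ f′(u) du)²/(2(τ−t)) ) − exp( −(b + a − ∫_t^τ f′(u) du)²/(2(τ−t)) ) ], and for 0 ≤ t < τ < s and a, b > 0 define G(t,a;τ,b) := (φ_b(s−τ)/φ_a(s−t)) · H(t,a;τ,b). Fix t ∈ [0,s) and a > 0. Then the function (τ,b) ↦ G(t,a;τ,b) satisfies the Fokker–Planck (forward Kolmogorov) equation ∂_τ G(t,a;τ,b) + f″(τ)·b·G(t,a;τ,b) = (1/2) ∂²_{bb} G(t,a;τ,b) − ∂_b[ (1/b − b/(s−τ))·G(t,a;τ,b) ] for all t < τ < s and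 b > 0. -/
open Real intervalIntegral

noncomputable def fpQ (F : ℝ → ℝ) (t a s σ τ' b' : ℝ) : ℝ :=
  -b' ^ 2 / (2 * (s - τ')) + (∫ u in t..τ', F u ^ 2) / 2 - F τ' * b' + F t * a
    - (b' + σ * a - ∫ u in t..τ', F u) ^ 2 / (2 * (τ' - t))

noncomputable def fpG (F : ℝ → ℝ) (t a s c τ' b' : ℝ) : ℝ :=
  (2 * Real.pi * c)⁻¹ * b' * ((s - τ') * Real.sqrt (s - τ') * Real.sqrt (τ' - t))⁻¹ *
    (Real.exp (fpQ F t a s (-1) τ' b') - Real.exp (fpQ F t a s 1 τ' b'))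

lemma hasDerivAt_fpQ_b (F : ℝ → ℝ) (t a s τ : ℝ) (h1 : t < τ) (h2 : τ < s) (σ y : ℝ) :
    HasDerivAt (fun z => fpQ F t a s σ τ z)
      (-(y / (s - τ)) - F τ - (y + σ * a - ∫ u in t..τ, F u) / (τ - t)) y := by
  have hsl : s - τ ≠ 0 := by linarith
  have hsm : τ - t ≠ 0 := by linarith
  have t1 := (hasDerivAt_pow 2 y).neg.div_const (2 * (s - τ))
  have t2 := t1.add_const ((∫ u in t..τ, F u ^ 2) / 2)
  have t3 := t2.sub ((hasDerivAt_id' (x := y)).const_mul (F τ))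
  have t4 := t3.add_const (F t * a)
  have t5 := (((hasDerivAt_id' (x := y)).add_const (σ * a)).sub_const
      (∫ u in t..τ, F u)).pow 2
  have t6 := t4.sub (t5.div_const (2 * (τ - t)))
  have h : HasDerivAt (fun z => fpQ F t a s σ τ z) _ y := t6
  convert h using 1
  push_cast
  field_simp

noncomputable def fpP (F : ℝ → ℝ) (t a s σ τ y : ℝ) : ℝ :=
  -(y / (s - τ)) - F τ - (y + σ * a - ∫ u in t..τ, F u) / (τ - t)

lemma hasDerivAt_fpP (F : ℝ → ℝ) (t a s σ τ y : ℝ) :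
    HasDerivAt (fun z => fpP F t a s σ τ z) (-(1 / (s - τ)) - 1 / (τ - t)) y := by
  have t1 := ((hasDerivAt_id' (x := y)).div_const (s - τ)).neg
  have t2 := t1.sub_const (F τ)
  have t3 := ((hasDerivAt_id' (x := y)).add_const (σ * a)).sub_const (∫ u in t..τ, F u)
  have h : HasDerivAt (fun z => fpP F t a s σ τ z) _ y := t2.sub (t3.div_const (τ - t))
  convert h using 1
  all_goals ring

noncomputable def fpG1 (F : ℝ → ℝ) (t a s c τ y : ℝ) : ℝ :=
  (2 * Real.pi * c)⁻¹ * ((s - τ) * Real.sqrt (s - τ) * Real.sqrt (τ - t))⁻¹ *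
    ((Real.exp (fpQ F t a s (-1) τ y) - Real.exp (fpQ F t a s 1 τ y))
      + y * (fpP F t a s (-1) τ y * Real.exp (fpQ F t a s (-1) τ y)
           - fpP F t a s 1 τ y * Real.exp (fpQ F t a s 1 τ y)))

lemma hasDerivAt_fpG_b (F : ℝ → ℝ) (t a s c τ : ℝ) (h1 : t < τ) (h2 : τ < s) (y : ℝ) :
    HasDerivAt (fun z => fpG F t a s c τ z) (fpG1 F t a s c τ y) y := by
  have hE := ((hasDerivAt_fpQ_b F t a s τ h1 h2 (-1) y).exp).sub
    ((hasDerivAt_fpQ_b F t a s τ h1 h2 1 y).exp)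
  have hm := (hasDerivAt_id' (x := y)).mul hE
  have h := hm.const_mul ((2 * Real.pi * c)⁻¹ *
    ((s - τ) * Real.sqrt (s - τ) * Real.sqrt (τ - t))⁻¹)
  have h3 : HasDerivAt (fun z => fpG F t a s c τ z) _ y :=
    h.congr_of_eventuallyEq (Filter.Eventually.of_forall fun z => by simp only [fpG, Pi.mul_apply, Pi.sub_apply, Pi.add_apply, Pi.inv_apply]; ring)
  convert h3 using 1
  all_goals simp only [fpG1, fpP, Pi.mul_apply, Pi.sub_apply, Pi.add_apply, Pi.inv_apply]
  all_goals ring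

noncomputable def fpG2 (F : ℝ → ℝ) (t a s c τ y : ℝ) : ℝ :=
  (2 * Real.pi * c)⁻¹ * ((s - τ) * Real.sqrt (s - τ) * Real.sqrt (τ - t))⁻¹ *
    (2 * (fpP F t a s (-1) τ y * Real.exp (fpQ F t a s (-1) τ y)
        - fpP F t a s 1 τ y * Real.exp (fpQ F t a s 1 τ y))
      + y * (((-(1 / (s - τ)) - 1 / (τ - t)) + fpP F t a s (-1) τ y ^ 2) *
              Real.exp (fpQ F t a s (-1) τ y)
           - ((-(1 / (s - τ)) - 1 / (τ - t)) + fpP F t a s 1 τ y ^ 2) *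
              Real.exp (fpQ F t a s 1 τ y)))

lemma hasDerivAt_fpG1 (F : ℝ → ℝ) (t a s c τ : ℝ) (h1 : t < τ) (h2 : τ < s) (y : ℝ) :
    HasDerivAt (fun z => fpG1 F t a s c τ z) (fpG2 F t a s c τ y) y := by
  have hQm := hasDerivAt_fpQ_b F t a s τ h1 h2 (-1) y
  have hQp := hasDerivAt_fpQ_b F t a s τ h1 h2 1 y
  have hPm := hasDerivAt_fpP F t a s (-1) τ y
  have hPp := hasDerivAt_fpP F t a s 1 τ y
  have hE := (hQm.exp).sub (hQp.exp)
  have hSm := hPm.mul hQm.exp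
  have hSp := hPp.mul hQp.exp
  have hS := hSm.sub hSp
  have hyS := (hasDerivAt_id' (x := y)).mul hS
  have h := (hE.add hyS).const_mul
    ((2 * Real.pi * c)⁻¹ * ((s - τ) * Real.sqrt (s - τ) * Real.sqrt (τ - t))⁻¹)
  have h3 : HasDerivAt (fun z => fpG1 F t a s c τ z) _ y := h
  convert h3 using 1
  all_goals simp only [fpG2, fpP, Pi.mul_apply, Pi.sub_apply, Pi.add_apply, Pi.inv_apply]
  all_goals ring

noncomputable def fpPt (F : ℝ → ℝ) (F2 t a s σ τ b : ℝ) : ℝ :=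
  -b ^ 2 / (2 * (s - τ) ^ 2) + F τ ^ 2 / 2 - F2 * b
    + (b + σ * a - ∫ u in t..τ, F u) * F τ / (τ - t)
    + (b + σ * a - ∫ u in t..τ, F u) ^ 2 / (2 * (τ - t) ^ 2)

noncomputable def fpGt (F : ℝ → ℝ) (F2 t a s c τ b : ℝ) : ℝ :=
  (2 * Real.pi * c)⁻¹ * b *
    (-(-(Real.sqrt (s - τ) * Real.sqrt (τ - t))
        - (s - τ) * Real.sqrt (τ - t) / (2 * Real.sqrt (s - τ))
        + (s - τ) * Real.sqrt (s - τ) / (2 * Real.sqrt (τ - t)))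
        / ((s - τ) * Real.sqrt (s - τ) * Real.sqrt (τ - t)) ^ 2
        * (Real.exp (fpQ F t a s (-1) τ b) - Real.exp (fpQ F t a s 1 τ b))
      + ((s - τ) * Real.sqrt (s - τ) * Real.sqrt (τ - t))⁻¹ *
        (fpPt F F2 t a s (-1) τ b * Real.exp (fpQ F t a s (-1) τ b)
          - fpPt F F2 t a s 1 τ b * Real.exp (fpQ F t a s 1 τ b)))

set_option maxHeartbeats 2000000 in
lemma hasDerivAt_fpG_tau (F : ℝ → ℝ) (F2 t a s c b τ : ℝ) (hc : c ≠ 0) (h1 : t < τ) (h2 : τ < s)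
    (hI : HasDerivAt (fun τ' => ∫ u in t..τ', F u) (F τ) τ)
    (hJ : HasDerivAt (fun τ' => ∫ u in t..τ', F u ^ 2) (F τ ^ 2) τ)
    (hF : HasDerivAt F F2 τ) :
    HasDerivAt (fun τ' => fpG F t a s c τ' b) (fpGt F F2 t a s c τ b) τ := by
  have hslpos : 0 < s - τ := by linarith
  have hsmpos : 0 < τ - t := by linarith
  have hrl : 0 < Real.sqrt (s - τ) := Real.sqrt_pos.mpr hslpos
  have hrm : 0 < Real.sqrt (τ - t) := Real.sqrt_pos.mpr hsmpos
  have hsl := (hasDerivAt_id' (x := τ)).const_sub s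
  have hsqa := hsl.sqrt (by positivity)
  have hsm := (hasDerivAt_id' (x := τ)).sub_const t
  have hsqb := hsm.sqrt (by positivity)
  have hL := (hsl.mul hsqa).mul hsqb
  have hLi := hL.inv (by simp only [Pi.mul_apply]; positivity)
  -- τ-derivative of the exponent, for each σ
  have hq : ∀ σ : ℝ, HasDerivAt (fun τ' => fpQ F t a s σ τ' b) _ τ := fun σ => by
    have t1 := (hasDerivAt_const τ (-b ^ 2)).div (hsl.const_mul 2) (by positivity)
    have t5num := ((hasDerivAt_const τ (b + σ * a)).sub hI).pow 2
    have t5 := t5num.div (hsm.const_mul 2) (by positivity)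
    exact ((((t1.add (hJ.div_const 2)).sub (hF.mul_const b)).add_const (F t * a)).sub t5)
  have hE := ((hq (-1)).exp).sub ((hq 1).exp)
  have h := (hLi.mul hE).const_mul ((2 * Real.pi * c)⁻¹ * b)
  have h3 : HasDerivAt (fun τ' => fpG F t a s c τ' b) _ τ :=
    h.congr_of_eventuallyEq (Filter.Eventually.of_forall fun z => by simp only [fpG, Pi.mul_apply, Pi.sub_apply, Pi.add_apply, Pi.inv_apply]; ring)
  convert h3 using 1
  simp only [fpGt, fpPt, Pi.mul_apply, Pi.sub_apply, Pi.add_apply, Pi.inv_apply, Pi.pow_apply, Pi.neg_apply, Pi.div_apply]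
  set rl := Real.sqrt (s - τ) with hrl'
  set rm := Real.sqrt (τ - t) with hrm'
  rw [show s - τ = rl ^ 2 from (Real.sq_sqrt hslpos.le).symm,
      show τ - t = rm ^ 2 from (Real.sq_sqrt hsmpos.le).symm]
  have hrl0 : rl ≠ 0 := ne_of_gt hrl
  have hrm0 : rm ≠ 0 := ne_of_gt hrm
  field_simp [hc, Real.pi_ne_zero]
  ring

set_option maxHeartbeats 4000000 in
lemma fp_main (F : ℝ → ℝ) (F2 t a s c τ b : ℝ) (hc : c ≠ 0)
    (h1 : t < τ) (h2 : τ < s) (hb : 0 < b) :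
    fpGt F F2 t a s c τ b + F2 * b * fpG F t a s c τ b =
      1/2 * fpG2 F t a s c τ b -
        ((-(1/b^2) - 1/(s - τ)) * fpG F t a s c τ b
          + (1/b - b/(s - τ)) * fpG1 F t a s c τ b) := by
  have hslpos : (0:ℝ) < s - τ := by linarith
  have hsmpos : (0:ℝ) < τ - t := by linarith
  simp only [fpGt, fpG2, fpG1, fpG, fpPt, fpP]
  set rl := Real.sqrt (s - τ) with hrl'
  set rm := Real.sqrt (τ - t) with hrm'
  have hrl : 0 < rl := Real.sqrt_pos.mpr hslpos
  have hrm : 0 < rm := Real.sqrt_pos.mpr hsmpos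
  rw [show s - τ = rl ^ 2 from (Real.sq_sqrt hslpos.le).symm,
      show τ - t = rm ^ 2 from (Real.sq_sqrt hsmpos.le).symm]
  have m1 : rl ≠ 0 := ne_of_gt hrl
  have m2 : rm ≠ 0 := ne_of_gt hrm
  field_simp [hc, Real.pi_ne_zero, hb.ne']
  ring

/-- With `φ_a(r)`, `H(t,a;τ,b)` and `G(t,a;τ,b) = (φ_b(s−τ)/φ_a(s−t))·H`
as in the paper, for fixed `t ∈ [0,s)` and `a > 0` the function `(τ,b) ↦ G(t,a;τ,b)`
satisfies the Fokker–Planck (forward Kolmogorov) equation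
`∂_τ G + f″(τ)·b·G = (1/2)∂²_{bb}G − ∂_b[(1/b − b/(s−τ))·G]` for all `t < τ < s`, `b > 0`. -/
theorem stmt_14 (f : ℝ → ℝ) (hf : ContDiff ℝ 2 f) (s : ℝ) (hs : 0 < s)
    (φ : ℝ → ℝ → ℝ)
    (hφ : ∀ a r : ℝ, 0 < a → 0 < r →
      φ a r = a / Real.sqrt (2 * Real.pi * r ^ 3) * Real.exp (-a ^ 2 / (2 * r)))
    (H : ℝ → ℝ → ℝ → ℝ → ℝ)
    (hH : ∀ t a τ b : ℝ, 0 ≤ t → t < τ →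
      H t a τ b = (2 * Real.pi * (τ - t)) ^ (-(1:ℝ)/2) *
        Real.exp ((1/2) * (∫ u in t..τ, (deriv f u) ^ 2) - deriv f τ * b + deriv f t * a) *
        (Real.exp (-(b - a - ∫ u in t..τ, deriv f u) ^ 2 / (2 * (τ - t)))
          - Real.exp (-(b + a - ∫ u in t..τ, deriv f u) ^ 2 / (2 * (τ - t)))))
    (G : ℝ → ℝ → ℝ → ℝ → ℝ)
    (hG : ∀ t a τ b : ℝ, 0 ≤ t → t < τ → τ < s → 0 < a → 0 < b →
      G t a τ b = φ b (s - τ) / φ a (s - t) * H t a τ b)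
    (t : ℝ) (ht : t ∈ Set.Ico 0 s) (a : ℝ) (ha : 0 < a) :
    ∀ τ : ℝ, t < τ → τ < s → ∀ b : ℝ, 0 < b →
      deriv (fun τ' => G t a τ' b) τ + deriv (deriv f) τ * b * G t a τ b =
        (1/2) * deriv (deriv (fun b' => G t a τ b')) b
          - deriv (fun b' => (1/b' - b'/(s - τ)) * G t a τ b') b := by
  obtain ⟨ht0, hts⟩ := ht
  intro τ hτ hτs b hb
  have hf' : ContDiff ℝ (1 + 1) f := by
    rw [show ((1 : WithTop ℕ∞) + 1) = 2 by norm_num]; exact hf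
  have hF1 : ContDiff ℝ 1 (deriv f) := (contDiff_succ_iff_deriv.mp hf').2.2
  have hFc : Continuous (deriv f) := hF1.continuous
  have hFd : Differentiable ℝ (deriv f) := hF1.differentiable (by simp)
  have hI : HasDerivAt (fun τ' => ∫ u in t..τ', deriv f u) (deriv f τ) τ :=
    (hFc.integral_hasStrictDerivAt t τ).hasDerivAt
  have hJ : HasDerivAt (fun τ' => ∫ u in t..τ', deriv f u ^ 2) (deriv f τ ^ 2) τ :=
    ((hFc.pow 2).integral_hasStrictDerivAt t τ).hasDerivAt
  have hcpos : 0 < φ a (s - t) := by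
    rw [hφ a (s - t) ha (by linarith)]
    have h0 : 0 < s - t := by linarith
    have h1 : 0 < 2 * Real.pi * (s - t) ^ 3 :=
      mul_pos (by positivity) (pow_pos h0 3)
    exact mul_pos (div_pos ha (Real.sqrt_pos.mpr h1)) (Real.exp_pos _)
  have hval : ∀ τ', t < τ' → τ' < s → ∀ b', 0 < b' →
      G t a τ' b' = fpG (deriv f) t a s (φ a (s - t)) τ' b' := by
    intro τ' h1 h2 b' hb'
    have hsl : (0:ℝ) < s - τ' := by linarith
    have hsm : (0:ℝ) < τ' - t := by linarith
    have hst : (0:ℝ) < s - t := by linarith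
    rw [hG t a τ' b' ht0 h1 h2 ha hb', hH t a τ' b' ht0 h1,
      hφ b' (s - τ') hb' hsl, hφ a (s - t) ha hst]
    have hr : (2 * Real.pi * (τ' - t)) ^ (-(1:ℝ)/2)
        = (Real.sqrt (2 * Real.pi) * Real.sqrt (τ' - t))⁻¹ := by
      rw [show (-(1:ℝ)/2) = -(1/2) by norm_num, Real.rpow_neg (by positivity),
        ← Real.sqrt_eq_rpow, Real.sqrt_mul (by positivity)]
    have h3 : Real.sqrt (2 * Real.pi * (s - τ') ^ 3)
        = Real.sqrt (2 * Real.pi) * ((s - τ') * Real.sqrt (s - τ')) := by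
      rw [show 2 * Real.pi * (s - τ') ^ 3 = (2 * Real.pi) * ((s - τ') ^ 2 * (s - τ')) by ring,
        Real.sqrt_mul (by positivity), Real.sqrt_mul (sq_nonneg _), Real.sqrt_sq hsl.le]
    have h4 : Real.sqrt (2 * Real.pi * (s - t) ^ 3)
        = Real.sqrt (2 * Real.pi) * ((s - t) * Real.sqrt (s - t)) := by
      rw [show 2 * Real.pi * (s - t) ^ 3 = (2 * Real.pi) * ((s - t) ^ 2 * (s - t)) by ring,
        Real.sqrt_mul (by positivity), Real.sqrt_mul (sq_nonneg _), Real.sqrt_sq hst.le]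
    have hsplit : ∀ σ : ℝ, Real.exp (fpQ (deriv f) t a s σ τ' b')
        = Real.exp (-b' ^ 2 / (2 * (s - τ'))) *
          Real.exp ((1/2) * (∫ u in t..τ', (deriv f u) ^ 2) - deriv f τ' * b' + deriv f t * a) *
          Real.exp (-(b' + σ * a - ∫ u in t..τ', deriv f u) ^ 2 / (2 * (τ' - t))) := by
      intro σ
      rw [← Real.exp_add, ← Real.exp_add]
      congr 1
      simp only [fpQ]
      ring
    simp only [fpG]
    rw [hsplit, hsplit, hr, h3, h4,
      show (b' + (-1) * a - ∫ u in t..τ', deriv f u) = b' - a - ∫ u in t..τ', deriv f u by ring,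
      show (b' + 1 * a - ∫ u in t..τ', deriv f u) = b' + a - ∫ u in t..τ', deriv f u by ring]
    have n1 : Real.sqrt (2 * Real.pi) ≠ 0 := by positivity
    have n2 : Real.sqrt (s - τ') ≠ 0 := by
      exact ne_of_gt (Real.sqrt_pos.mpr hsl)
    have n3 : Real.sqrt (τ' - t) ≠ 0 := ne_of_gt (Real.sqrt_pos.mpr hsm)
    have n4 : Real.sqrt (s - t) ≠ 0 := ne_of_gt (Real.sqrt_pos.mpr hst)
    have n5 : Real.exp (-a ^ 2 / (2 * (s - t))) ≠ 0 := Real.exp_ne_zero _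
    have n6 : Real.sqrt (2 * Real.pi) * Real.sqrt (2 * Real.pi) = 2 * Real.pi :=
      Real.mul_self_sqrt (by positivity)
    set E1 := Real.exp (-b' ^ 2 / (2 * (s - τ'))) with hE1
    set E2 := Real.exp ((1/2) * (∫ u in t..τ', (deriv f u) ^ 2) - deriv f τ' * b'
      + deriv f t * a) with hE2
    set E3 := Real.exp (-(b' - a - ∫ u in t..τ', deriv f u) ^ 2 / (2 * (τ' - t))) with hE3
    set E4 := Real.exp (-(b' + a - ∫ u in t..τ', deriv f u) ^ 2 / (2 * (τ' - t))) with hE4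
    set E5 := Real.exp (-a ^ 2 / (2 * (s - t))) with hE5
    set S0 := Real.sqrt (2 * Real.pi) with hS0
    set S1 := Real.sqrt (s - τ') with hS1
    set S2 := Real.sqrt (τ' - t) with hS2
    set S3 := Real.sqrt (s - t) with hS3
    rw [← n6]
    have m0 : S0 ≠ 0 := by rw [hS0]; positivity
    field_simp [ha.ne', hsl.ne', hsm.ne', n2, n3, n4, n5, m0]
  -- abbreviations
  have hslpos : (0:ℝ) < s - τ := by linarith
  have hsmpos : (0:ℝ) < τ - t := by linarith
  have hFτ : HasDerivAt (deriv f) (deriv (deriv f) τ) τ := (hFd τ).hasDerivAt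
  -- τ-derivative
  have hmemτ : Set.Ioo t s ∈ nhds τ := isOpen_Ioo.mem_nhds ⟨hτ, hτs⟩
  have heqτ : (fun τ' => G t a τ' b)
      =ᶠ[nhds τ] fun τ' => fpG (deriv f) t a s (φ a (s - t)) τ' b := by
    filter_upwards [hmemτ] with x hx
    exact hval x hx.1 hx.2 b hb
  have d1 : deriv (fun τ' => G t a τ' b) τ
      = fpGt (deriv f) (deriv (deriv f) τ) t a s (φ a (s - t)) τ b := by
    rw [heqτ.deriv_eq]
    exact (hasDerivAt_fpG_tau (deriv f) (deriv (deriv f) τ) t a s (φ a (s - t)) b τ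
      hcpos.ne' hτ hτs hI hJ hFτ).deriv
  -- b-derivatives
  have hmemb : Set.Ioi (0:ℝ) ∈ nhds b := isOpen_Ioi.mem_nhds hb
  have heqb : (fun b' => G t a τ b')
      =ᶠ[nhds b] fun b' => fpG (deriv f) t a s (φ a (s - t)) τ b' := by
    filter_upwards [hmemb] with x hx
    exact hval τ hτ hτs x hx
  have e2 : deriv (fun b' => fpG (deriv f) t a s (φ a (s - t)) τ b')
      = fun y => fpG1 (deriv f) t a s (φ a (s - t)) τ y :=
    funext fun y => (hasDerivAt_fpG_b (deriv f) t a s (φ a (s - t)) τ hτ hτs y).deriv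
  have d2 : deriv (deriv (fun b' => G t a τ b')) b
      = fpG2 (deriv f) t a s (φ a (s - t)) τ b := by
    rw [(heqb.deriv).deriv_eq, e2]
    exact (hasDerivAt_fpG1 (deriv f) t a s (φ a (s - t)) τ hτ hτs b).deriv
  -- drift term derivative
  have heq3 : (fun b' => (1/b' - b'/(s - τ)) * G t a τ b')
      =ᶠ[nhds b] (fun b' => (1/b' - b'/(s - τ)) * fpG (deriv f) t a s (φ a (s - t)) τ b') := by
    filter_upwards [hmemb] with x hx
    rw [hval τ hτ hτs x hx]
  have h1b := (hasDerivAt_const b (1:ℝ)).div (hasDerivAt_id' (x := b)) hb.ne'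
  have h2b := (hasDerivAt_id' (x := b)).div_const (s - τ)
  have hdrift : HasDerivAt
      (fun b' => (1/b' - b'/(s - τ)) * fpG (deriv f) t a s (φ a (s - t)) τ b') _ b :=
    (h1b.sub h2b).mul (hasDerivAt_fpG_b (deriv f) t a s (φ a (s - t)) τ hτ hτs b)
  have d3 := heq3.deriv_eq.trans hdrift.deriv
  have d3' : deriv (fun b' => (1/b' - b'/(s - τ)) * G t a τ b') b
      = (-(1/b^2) - 1/(s - τ)) * fpG (deriv f) t a s (φ a (s - t)) τ b
        + (1/b - b/(s - τ)) * fpG1 (deriv f) t a s (φ a (s - t)) τ b := by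
    rw [d3]; simp only [Pi.sub_apply, Pi.div_apply]; ring
  rw [d1, d2, d3', hval τ hτ hτs b hb]
  exact fp_main (deriv f) (deriv (deriv f) τ) t a s (φ a (s - t)) τ b
    hcpos.ne' hτ hτs hb
end

section
/- Let f : ℝ → ℝ be twice continuously differentiable and let s > 0. For a > 0 and r > 0 define φ_a(r) := (a/√(2πr³)) · exp(−a²/(2r)). For 0 ≤ t < τ and a, b ∈ ℝ define H(t,a;τ,b) := (2π(τ−t))^{-1/2} · exp( (1/2)∫_t^τ f′(u)² du − f′(τ)·b + f′(t)·a ) · [ exp( −(b − a − ∫_t^τ f′(u) du)²/(2(τ−t)) ) − exp( −(b + a − ∫_t^τ f′(u) du)²/(2(τ−t)) ) ], and for 0 ≤ t < τ < s and a, b > 0 define G(t,a;τ,b) := (φ_b(s−τ)/φ_a(s−t)) · H(t,a;τ,b). Then for every τ ∈ (0,s), every a > 0, and every bounded continuous function g : [0,∞) → ℝ, the integral ∫₀^∞ G(t,a;τ,b)·g(b) db converges to g(a) as t → τ from the left. -/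
open Real MeasureTheory Filter Set
open scoped Topology

lemma aux_exp_decay {k : ℝ} (hk : 0 < k) :
    Tendsto (fun ε : ℝ => Real.exp (-(k/ε))) (𝓝[>] (0:ℝ)) (𝓝 0) := by
  apply Real.tendsto_exp_atBot.comp
  have h1 : Tendsto (fun ε : ℝ => k * ε⁻¹) (𝓝[>] (0:ℝ)) atTop :=
    tendsto_inv_nhdsGT_zero.const_mul_atTop hk
  have h2 := tendsto_neg_atBot_iff.mpr h1
  refine h2.congr fun ε => by rw [div_eq_mul_inv]

lemma aux_sqrt_exp_decay {k : ℝ} (hk : 0 < k) :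
    Tendsto (fun ε : ℝ => (Real.sqrt (2*Real.pi*ε))⁻¹ * Real.exp (-(k/ε)))
      (𝓝[>] (0:ℝ)) (𝓝 0) := by
  have h1 : Tendsto (fun y : ℝ => (Real.sqrt (2*Real.pi))⁻¹ * (y ^ ((1:ℝ)/2) * Real.exp (-k*y)))
      atTop (𝓝 0) := by
    simpa using (tendsto_rpow_mul_exp_neg_mul_atTop_nhds_zero (1/2) k hk).const_mul
      (Real.sqrt (2*Real.pi))⁻¹
  refine (h1.comp tendsto_inv_nhdsGT_zero).congr' ?_
  filter_upwards [self_mem_nhdsWithin] with ε (hε : (0:ℝ) < ε)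
  have h2 : Real.sqrt (2*Real.pi*ε) = Real.sqrt (2*Real.pi) * Real.sqrt ε := by
    rw [Real.sqrt_mul (by positivity)]
  have h3 : -k * ε⁻¹ = -(k/ε) := by ring
  simp only [Function.comp]
  rw [← Real.sqrt_eq_rpow, Real.sqrt_inv, h2, mul_inv, h3]
  ring

lemma aux_gauss_integrable {ε : ℝ} (hε : 0 < ε) (m : ℝ) :
    Integrable (fun x : ℝ => Real.exp (-(x - m)^2 / (2*ε))) := by
  have h : ∀ x : ℝ, Real.exp (-(x - m)^2 / (2*ε)) = Real.exp (-(2*ε)⁻¹ * (x - m)^2) := by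
    intro x; congr 1; field_simp
  simp_rw [h]
  exact (integrable_exp_neg_mul_sq (show 0 < (2*ε)⁻¹ by positivity)).comp_sub_right m

lemma aux_gauss_integral {ε : ℝ} (hε : 0 < ε) (m : ℝ) :
    ∫ x : ℝ, Real.exp (-(x - m)^2 / (2*ε)) = Real.sqrt (2*Real.pi*ε) := by
  have h : ∀ x : ℝ, Real.exp (-(x - m)^2 / (2*ε)) = Real.exp (-(2*ε)⁻¹ * (x - m)^2) := by
    intro x; congr 1; field_simp
  simp_rw [h]
  rw [integral_sub_right_eq_self (fun x => Real.exp (-(2*ε)⁻¹ * x^2)) m, integral_gaussian]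
  congr 1
  rw [eq_comm, eq_div_iff (by positivity)]
  field_simp

set_option maxHeartbeats 2000000 in
/-- With `φ_a(r)`, `H(t,a;τ,b)` and `G(t,a;τ,b) = (φ_b(s−τ)/φ_a(s−t))·H`
as in the paper, for every `τ ∈ (0,s)`, every `a > 0`, and every bounded continuous
`g : [0,∞) → ℝ`, the integral `∫₀^∞ G(t,a;τ,b)·g(b) db` converges to `g(a)` as `t → τ⁻`
with `0 ≤ t < τ`. -/
theorem stmt_15 (f : ℝ → ℝ) (hf : ContDiff ℝ 2 f) (s : ℝ) (hs : 0 < s)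
    (φ : ℝ → ℝ → ℝ)
    (hφ : ∀ a r : ℝ, 0 < a → 0 < r →
      φ a r = a / Real.sqrt (2 * Real.pi * r ^ 3) * Real.exp (-a ^ 2 / (2 * r)))
    (H : ℝ → ℝ → ℝ → ℝ → ℝ)
    (hH : ∀ t a τ b : ℝ, 0 ≤ t → t < τ →
      H t a τ b = (2 * Real.pi * (τ - t)) ^ (-(1:ℝ)/2) *
        Real.exp ((1/2) * (∫ u in t..τ, (deriv f u) ^ 2) - deriv f τ * b + deriv f t * a) *
        (Real.exp (-(b - a - ∫ u in t..τ, deriv f u) ^ 2 / (2 * (τ - t)))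
          - Real.exp (-(b + a - ∫ u in t..τ, deriv f u) ^ 2 / (2 * (τ - t)))))
    (G : ℝ → ℝ → ℝ → ℝ → ℝ)
    (hG : ∀ t a τ b : ℝ, 0 ≤ t → t < τ → τ < s → 0 < a → 0 < b →
      G t a τ b = φ b (s - τ) / φ a (s - t) * H t a τ b)
    (τ : ℝ) (hτ : τ ∈ Set.Ioo 0 s) (a : ℝ) (ha : 0 < a)
    (g : ℝ → ℝ) (hg : ContinuousOn g (Set.Ici 0))
    (hgb : ∃ M : ℝ, ∀ b ∈ Set.Ici (0:ℝ), |g b| ≤ M) :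
    Filter.Tendsto (fun t => ∫ b in Set.Ioi (0:ℝ), G t a τ b * g b)
      (nhdsWithin τ (Set.Ico 0 τ)) (nhds (g a)) := by
  obtain ⟨hτ0, hτs⟩ := hτ
  obtain ⟨M, hM⟩ := hgb
  have hM0 : 0 ≤ M := (abs_nonneg _).trans (hM 0 (Set.mem_Ici.mpr le_rfl))
  have hdiff : Differentiable ℝ f := hf.differentiable (by norm_num)
  have hd : Continuous (deriv f) := hf.continuous_deriv (by norm_num)
  have hq : 0 < s - τ := by linarith
  set l : Filter ℝ := nhdsWithin τ (Set.Ico 0 τ) with hl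
  set c : ℝ → ℝ := fun t => ∫ u in t..τ, deriv f u with hc
  set A : ℝ → ℝ := fun t => ∫ u in t..τ, (deriv f u)^2 with hA
  set v : ℝ → ℝ := fun b => b / Real.sqrt (2*Real.pi*(s-τ)^3) * Real.exp (-b^2/(2*(s-τ))) *
      Real.exp (-(deriv f τ * b)) with hv
  set β : ℝ → ℝ := fun t => Real.exp (1/2 * A t + deriv f t * a) /
      (a / Real.sqrt (2*Real.pi*(s-t)^3) * Real.exp (-a^2/(2*(s-t)))) with hβ
  set F : ℝ → ℝ := Set.indicator (Set.Ioi 0) (fun b => v b * g b) with hF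
  set Φ : ℝ → ℝ → ℝ := fun t x => (Real.sqrt (2*Real.pi*(τ - t)))⁻¹ *
      Real.exp (-(x - a - c t)^2 / (2*(τ - t))) with hΦdef
  set Ψ : ℝ → ℝ → ℝ := fun t x => (Real.sqrt (2*Real.pi*(τ - t)))⁻¹ *
      Real.exp (-(x + a - c t)^2 / (2*(τ - t))) with hΨdef
  -- basic limits
  have hL1 : Tendsto (fun t => τ - t) l (𝓝[>] (0:ℝ)) := by
    have h1 : Tendsto (fun t : ℝ => τ - t) l (𝓝 0) := by
      have h0 : Tendsto (fun t : ℝ => τ - t) (𝓝 τ) (𝓝 (τ - τ)) :=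
        ((continuous_const.sub continuous_id).tendsto τ : _)
      rw [sub_self] at h0
      exact h0.mono_left nhdsWithin_le_nhds
    refine tendsto_nhdsWithin_of_tendsto_nhds_of_eventually_within _ h1 ?_
    filter_upwards [self_mem_nhdsWithin] with t ht
    exact sub_pos.mpr ht.2
  have hcf : ∀ t : ℝ, c t = f τ - f t := by
    intro t
    simp only [hc]
    exact intervalIntegral.integral_deriv_eq_sub (fun x _ => hdiff x)
      (hd.intervalIntegrable _ _)
  have hL2 : Tendsto c l (𝓝 0) := by
    have h1 : Tendsto (fun t => f τ - f t) (𝓝 τ) (𝓝 (f τ - f τ)) :=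
      (continuous_const.sub hdiff.continuous).tendsto τ
    rw [sub_self] at h1
    exact (h1.mono_left nhdsWithin_le_nhds).congr fun t => (hcf t).symm
  have hL3 : Tendsto A l (𝓝 0) := by
    obtain ⟨C, hC⟩ := (isCompact_Icc : IsCompact (Set.Icc (0:ℝ) τ)).exists_bound_of_continuousOn
      (hd.pow 2).continuousOn
    have hb : ∀ᶠ t in l, ‖A t‖ ≤ C * |τ - t| := by
      filter_upwards [self_mem_nhdsWithin] with t ht
      simp only [hA]
      apply intervalIntegral.norm_integral_le_of_norm_le_const
      intro x hx
      rw [Set.uIoc_of_le ht.2.le] at hx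
      exact hC x ⟨le_trans ht.1 hx.1.le, hx.2⟩
    have hb2 : Tendsto (fun t => C * |τ - t|) l (𝓝 0) := by
      have h0 : Tendsto (fun t : ℝ => C * |τ - t|) (𝓝 τ) (𝓝 (C * |τ - τ|)) :=
        ((continuous_const.mul (continuous_const.sub continuous_id).abs).tendsto τ : _)
      rw [sub_self, abs_zero, mul_zero] at h0
      exact h0.mono_left nhdsWithin_le_nhds
    exact squeeze_zero_norm' hb hb2
  have hβlim : Tendsto β l (𝓝 (Real.exp (1/2 * 0 + deriv f τ * a) /
      (a / Real.sqrt (2*Real.pi*(s-τ)^3) * Real.exp (-a^2/(2*(s-τ)))))) := by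
    have hden_pos : 0 < a / Real.sqrt (2*Real.pi*(s-τ)^3) * Real.exp (-a^2/(2*(s-τ))) := by
      have h1 : 0 < Real.sqrt (2*Real.pi*(s-τ)^3) :=
        Real.sqrt_pos.mpr (by positivity)
      positivity
    have hnum : Tendsto (fun t => Real.exp (1/2 * A t + deriv f t * a)) l
        (𝓝 (Real.exp (1/2 * 0 + deriv f τ * a))) := by
      apply (Real.continuous_exp.tendsto _).comp
      exact (hL3.const_mul _).add
        (((hd.tendsto τ).mono_left nhdsWithin_le_nhds).mul_const _)
    have hden : Tendsto (fun t : ℝ => a / Real.sqrt (2*Real.pi*(s-t)^3) *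
        Real.exp (-a^2/(2*(s-t)))) l
        (𝓝 (a / Real.sqrt (2*Real.pi*(s-τ)^3) * Real.exp (-a^2/(2*(s-τ))))) := by
      have hct : ContinuousAt (fun t : ℝ => a / Real.sqrt (2*Real.pi*(s-t)^3) *
          Real.exp (-a^2/(2*(s-t)))) τ := by
        apply ContinuousAt.mul
        · apply ContinuousAt.div continuousAt_const
          · exact (Real.continuous_sqrt.comp (by fun_prop)).continuousAt
          · exact ne_of_gt (Real.sqrt_pos.mpr (by positivity))
        · apply Real.continuous_exp.continuousAt.comp
          apply ContinuousAt.div continuousAt_const (by fun_prop)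
          positivity
      exact hct.tendsto.mono_left nhdsWithin_le_nhds
    simp only [hβ]
    exact hnum.div hden (ne_of_gt hden_pos)
  -- continuity and integrability of F
  have hv_cont : Continuous v := by
    apply Continuous.mul
    apply Continuous.mul
    · exact continuous_id.div_const _
    · exact Real.continuous_exp.comp (by fun_prop)
    · exact Real.continuous_exp.comp (by fun_prop)
  have hvg_meas : AEStronglyMeasurable (fun b => v b * g b) (volume.restrict (Set.Ioi 0)) :=
    (hv_cont.continuousOn.mul (hg.mono Set.Ioi_subset_Ici_self)).aestronglyMeasurable
      measurableSet_Ioi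
  have hvg_int : IntegrableOn (fun b => v b * g b) (Set.Ioi 0) := by
    have hQ : 0 < Real.sqrt (2*Real.pi*(s-τ)^3) := Real.sqrt_pos.mpr (by positivity)
    have hint : Integrable (fun b : ℝ =>
        (M / Real.sqrt (2*Real.pi*(s-τ)^3) * Real.exp ((deriv f τ)^2*(s-τ))) *
        ‖b * Real.exp (-(4*(s-τ))⁻¹ * b^2)‖) :=
      ((integrable_mul_exp_neg_mul_sq (show 0 < (4*(s-τ))⁻¹ by positivity)).norm.const_mul _)
    apply Integrable.mono' hint.integrableOn hvg_meas
    filter_upwards [ae_restrict_mem measurableSet_Ioi] with b hb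
    have hb0 : (0:ℝ) < b := hb
    have hvb : 0 ≤ v b := by
      simp only [hv]
      exact mul_nonneg (mul_nonneg (div_nonneg hb0.le (Real.sqrt_nonneg _))
        (Real.exp_pos _).le) (Real.exp_pos _).le
    have hexp : -b^2/(2*(s-τ)) + -(deriv f τ * b) ≤
        (deriv f τ)^2*(s-τ) + -(4*(s-τ))⁻¹ * b^2 := by
      rw [← sub_nonneg]
      have hrw : (deriv f τ)^2*(s-τ) + -(4*(s-τ))⁻¹ * b^2 -
          (-b^2/(2*(s-τ)) + -(deriv f τ * b)) =
          (2*(s-τ)*deriv f τ + b)^2 / (4*(s-τ)) := by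
        field_simp
        ring
      rw [hrw]
      positivity
    rw [norm_mul]
    calc ‖v b‖ * ‖g b‖ ≤ v b * M := by
          rw [Real.norm_of_nonneg hvb]
          exact mul_le_mul_of_nonneg_left (hM b hb0.le) hvb
      _ = M / Real.sqrt (2*Real.pi*(s-τ)^3) * b *
          Real.exp (-b^2/(2*(s-τ)) + -(deriv f τ * b)) := by
          rw [Real.exp_add]; simp only [hv]; ring
      _ ≤ M / Real.sqrt (2*Real.pi*(s-τ)^3) * b *
          Real.exp ((deriv f τ)^2*(s-τ) + -(4*(s-τ))⁻¹ * b^2) := by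
          apply mul_le_mul_of_nonneg_left (Real.exp_le_exp.mpr hexp)
          positivity
      _ = (M / Real.sqrt (2*Real.pi*(s-τ)^3) * Real.exp ((deriv f τ)^2*(s-τ))) *
          (b * Real.exp (-(4*(s-τ))⁻¹ * b^2)) := by
          rw [Real.exp_add]; ring
      _ = (M / Real.sqrt (2*Real.pi*(s-τ)^3) * Real.exp ((deriv f τ)^2*(s-τ))) *
          ‖b * Real.exp (-(4*(s-τ))⁻¹ * b^2)‖ := by
          rw [Real.norm_of_nonneg (by positivity)]
  have hF_int : Integrable F := hvg_int.integrable_indicator measurableSet_Ioi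
  -- Φ integrable and total mass 1
  have hΦ_int : ∀ t : ℝ, t < τ → Integrable (Φ t) := by
    intro t ht
    have hε : 0 < τ - t := sub_pos.mpr ht
    simp only [hΦdef]
    apply Integrable.const_mul
    have heq : (fun x : ℝ => Real.exp (-(x - a - c t)^2/(2*(τ - t))))
        = fun x => Real.exp (-(x - (a + c t))^2/(2*(τ - t))) := by
      funext x; rw [sub_sub]
    rw [heq]
    exact aux_gauss_integrable hε (a + c t)
  have hΦtot : ∀ t : ℝ, t < τ → ∫ x, Φ t x = 1 := by
    intro t ht
    have hε : 0 < τ - t := sub_pos.mpr ht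
    simp only [hΦdef]
    rw [MeasureTheory.integral_const_mul]
    simp_rw [sub_sub]
    rw [aux_gauss_integral hε (a + c t)]
    exact inv_mul_cancel₀ (by positivity)
  -- peak function hypotheses
  have hnφ : ∀ᶠ t in l, ∀ x : ℝ, 0 ≤ Φ t x := by
    filter_upwards with t x
    exact mul_nonneg (inv_nonneg.mpr (Real.sqrt_nonneg _)) (Real.exp_pos _).le
  have h'iφ : ∀ᶠ t in l, AEStronglyMeasurable (Φ t) volume := by
    filter_upwards with t
    exact (continuous_const.mul (Real.continuous_exp.comp (by fun_prop))).aestronglyMeasurable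
  have hlφ : ∀ u : Set ℝ, IsOpen u → a ∈ u → TendstoUniformlyOn Φ 0 l uᶜ := by
    intro u hu hau
    obtain ⟨δ, hδ, hball⟩ := Metric.isOpen_iff.mp hu a hau
    rw [Metric.tendstoUniformlyOn_iff]
    intro η hη
    have hsm : Tendsto (fun t => (Real.sqrt (2*Real.pi*(τ - t)))⁻¹ *
        Real.exp (-((δ/2)^2/2/(τ - t)))) l (𝓝 0) :=
      (aux_sqrt_exp_decay (k := (δ/2)^2/2) (by positivity)).comp hL1
    have hcsmall : ∀ᶠ t in l, |c t| < δ/2 := by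
      have := Metric.tendsto_nhds.mp hL2 (δ/2) (by positivity)
      simpa [Real.dist_eq] using this
    filter_upwards [hcsmall, Metric.tendsto_nhds.mp hsm η hη, self_mem_nhdsWithin]
      with t hct hst ht
    intro x hx
    have hε : 0 < τ - t := sub_pos.mpr ht.2
    rw [Real.dist_eq, sub_zero] at hst
    have hxa : δ ≤ |x - a| := by
      by_contra hlt
      push_neg at hlt
      exact hx (hball (by rwa [Metric.mem_ball, Real.dist_eq]))
    have h1 : δ/2 ≤ |x - a - c t| := by
      have h := abs_sub_abs_le_abs_sub (x - a) (c t)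
      linarith
    have h2 : Φ t x ≤ (Real.sqrt (2*Real.pi*(τ - t)))⁻¹ *
        Real.exp (-((δ/2)^2/2/(τ - t))) := by
      simp only [hΦdef]
      apply mul_le_mul_of_nonneg_left _ (inv_nonneg.mpr (Real.sqrt_nonneg _))
      apply Real.exp_le_exp.mpr
      have hsq : (δ/2)^2 ≤ (x - a - c t)^2 := by
        calc (δ/2)^2 ≤ |x - a - c t|^2 := by
              apply pow_le_pow_left₀ (by positivity) h1
          _ = (x - a - c t)^2 := sq_abs _
      rw [← sub_nonneg]
      have hrw : -((δ/2)^2/2/(τ - t)) - -(x - a - c t)^2/(2*(τ - t)) =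
          ((x - a - c t)^2 - (δ/2)^2)/(2*(τ - t)) := by
        field_simp
        ring
      rw [hrw]
      apply div_nonneg (by linarith) (by linarith)
    have hΦnn : 0 ≤ Φ t x := by
      simp only [hΦdef]
      exact mul_nonneg (inv_nonneg.mpr (Real.sqrt_nonneg _)) (Real.exp_pos _).le
    rw [dist_comm, Real.dist_eq]
    simp only [Pi.zero_apply, sub_zero]
    rw [abs_of_nonneg hΦnn]
    exact lt_of_le_of_lt (h2.trans (le_abs_self _)) hst
  have hiφ : Tendsto (fun t => ∫ x in Metric.ball a 1, Φ t x) l (𝓝 1) := by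
    have hcsmall : ∀ᶠ t in l, |c t| < 1/2 := by
      have := Metric.tendsto_nhds.mp hL2 (1/2) (by norm_num)
      simpa [Real.dist_eq] using this
    have hbd : Tendsto (fun t => Real.sqrt 2 * Real.exp (-(1/16/(τ - t)))) l (𝓝 0) := by
      have h0 := ((aux_exp_decay (show (0:ℝ) < 1/16 by norm_num)).comp hL1).const_mul
        (Real.sqrt 2)
      simpa using h0
    have hJ : ∀ᶠ t in l, ∫ x in Metric.ball a 1, Φ t x =
        1 - ∫ x in (Metric.ball a 1)ᶜ, Φ t x := by
      filter_upwards [self_mem_nhdsWithin] with t ht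
      have h : (∫ x in Metric.ball a 1, Φ t x) + ∫ x in (Metric.ball a 1)ᶜ, Φ t x
          = ∫ x, Φ t x :=
        MeasureTheory.integral_add_compl measurableSet_ball (hΦ_int t ht.2)
      rw [hΦtot t ht.2] at h
      linarith
    have hJ0 : ∀ᶠ t in l, 0 ≤ ∫ x in (Metric.ball a 1)ᶜ, Φ t x := by
      filter_upwards with t
      exact setIntegral_nonneg measurableSet_ball.compl
        (fun x _ => mul_nonneg (inv_nonneg.mpr (Real.sqrt_nonneg _)) (Real.exp_pos _).le)
    have hJle : ∀ᶠ t in l, ∫ x in (Metric.ball a 1)ᶜ, Φ t x ≤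
        Real.sqrt 2 * Real.exp (-(1/16/(τ - t))) := by
      filter_upwards [self_mem_nhdsWithin, hcsmall] with t ht hct
      have hε : 0 < τ - t := sub_pos.mpr ht.2
      have hε2 : 0 < 2*(τ - t) := by linarith
      have hsqp : 0 < Real.sqrt (2*Real.pi*(τ - t)) :=
        Real.sqrt_pos.mpr (by positivity)
      have hRint : Integrable (fun x : ℝ => Real.exp (-(1/16/(τ - t))) *
          ((Real.sqrt (2*Real.pi*(τ - t)))⁻¹ *
            Real.exp (-(x - a - c t)^2/(2*(2*(τ - t)))))) := by
        apply Integrable.const_mul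
        apply Integrable.const_mul
        have heq : (fun x : ℝ => Real.exp (-(x - a - c t)^2/(2*(2*(τ - t)))))
            = fun x => Real.exp (-(x - (a + c t))^2/(2*(2*(τ - t)))) := by
          funext x; rw [sub_sub]
        rw [heq]
        exact aux_gauss_integrable hε2 (a + c t)
      have hpt : ∀ x ∈ (Metric.ball a 1)ᶜ, Φ t x ≤ Real.exp (-(1/16/(τ - t))) *
          ((Real.sqrt (2*Real.pi*(τ - t)))⁻¹ *
            Real.exp (-(x - a - c t)^2/(2*(2*(τ - t))))) := by
        intro x hx
        have hxa : 1 ≤ |x - a| := by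
          rw [Set.mem_compl_iff, Metric.mem_ball, Real.dist_eq, not_lt] at hx
          exact hx
        have h1 : 1/2 ≤ |x - a - c t| := by
          have h := abs_sub_abs_le_abs_sub (x - a) (c t)
          linarith
        have hsq : (1:ℝ)/4 ≤ (x - a - c t)^2 := by
          calc (1:ℝ)/4 = (1/2)^2 := by norm_num
            _ ≤ |x - a - c t|^2 := by apply pow_le_pow_left₀ (by norm_num) h1
            _ = (x - a - c t)^2 := sq_abs _
        have hexple : -(x - a - c t)^2/(2*(τ - t)) ≤
            -(1/16/(τ - t)) + -(x - a - c t)^2/(2*(2*(τ - t))) := by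
          rw [← sub_nonneg]
          have hrw : -(1/16/(τ - t)) + -(x - a - c t)^2/(2*(2*(τ - t))) -
              -(x - a - c t)^2/(2*(τ - t)) =
              ((x - a - c t)^2 - 1/4)/(4*(τ - t)) := by
            field_simp
            ring
          rw [hrw]
          apply div_nonneg (by linarith) (by linarith)
        calc Φ t x = (Real.sqrt (2*Real.pi*(τ - t)))⁻¹ *
              Real.exp (-(x - a - c t)^2/(2*(τ - t))) := rfl
          _ ≤ (Real.sqrt (2*Real.pi*(τ - t)))⁻¹ *
              (Real.exp (-(1/16/(τ - t))) * Real.exp (-(x - a - c t)^2/(2*(2*(τ - t))))) := by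
              apply mul_le_mul_of_nonneg_left _ (inv_nonneg.mpr (Real.sqrt_nonneg _))
              rw [← Real.exp_add]
              exact Real.exp_le_exp.mpr hexple
          _ = Real.exp (-(1/16/(τ - t))) * ((Real.sqrt (2*Real.pi*(τ - t)))⁻¹ *
              Real.exp (-(x - a - c t)^2/(2*(2*(τ - t))))) := by ring
      calc ∫ x in (Metric.ball a 1)ᶜ, Φ t x
          ≤ ∫ x in (Metric.ball a 1)ᶜ, Real.exp (-(1/16/(τ - t))) *
            ((Real.sqrt (2*Real.pi*(τ - t)))⁻¹ *
              Real.exp (-(x - a - c t)^2/(2*(2*(τ - t))))) :=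
            setIntegral_mono_on (hΦ_int t ht.2).integrableOn hRint.integrableOn
              measurableSet_ball.compl hpt
        _ ≤ ∫ x, Real.exp (-(1/16/(τ - t))) * ((Real.sqrt (2*Real.pi*(τ - t)))⁻¹ *
              Real.exp (-(x - a - c t)^2/(2*(2*(τ - t))))) :=
            setIntegral_le_integral hRint (Eventually.of_forall fun x => by positivity)
        _ = Real.sqrt 2 * Real.exp (-(1/16/(τ - t))) := by
            rw [MeasureTheory.integral_const_mul, MeasureTheory.integral_const_mul]
            have heq : (fun x : ℝ => Real.exp (-(x - a - c t)^2/(2*(2*(τ - t)))))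
                = fun x => Real.exp (-(x - (a + c t))^2/(2*(2*(τ - t)))) := by
              funext x; rw [sub_sub]
            rw [heq, aux_gauss_integral hε2 (a + c t)]
            have h2 : Real.sqrt (2*Real.pi*(2*(τ - t))) =
                Real.sqrt 2 * Real.sqrt (2*Real.pi*(τ - t)) := by
              rw [← Real.sqrt_mul (by norm_num)]
              congr 1
              ring
            rw [h2]
            field_simp
    have hcompl0 : Tendsto (fun t => ∫ x in (Metric.ball a 1)ᶜ, Φ t x) l (𝓝 0) :=
      tendsto_of_tendsto_of_tendsto_of_le_of_le' tendsto_const_nhds hbd hJ0 hJle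
    have h5 : Tendsto (fun t => 1 - ∫ x in (Metric.ball a 1)ᶜ, Φ t x) l (𝓝 (1 - 0)) :=
      tendsto_const_nhds.sub hcompl0
    rw [sub_zero] at h5
    exact h5.congr' (by filter_upwards [hJ] with t ht using ht.symm)
  have hcg : Tendsto F (𝓝 a) (𝓝 (v a * g a)) := by
    have h1 : ContinuousAt (fun b => v b * g b) a :=
      hv_cont.continuousAt.mul (hg.continuousAt (Ici_mem_nhds ha))
    have h2 : F =ᶠ[𝓝 a] fun b => v b * g b := by
      filter_upwards [Ioi_mem_nhds ha] with x hx
      simp [hF, Set.indicator_of_mem hx]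
    exact h1.tendsto.congr' h2.symm
  have hI : Tendsto (fun t => ∫ x, Φ t x • F x) l (𝓝 (v a * g a)) := by
    exact tendsto_integral_peak_smul_of_integrable_of_tendsto (x₀ := a)
      measurableSet_ball (Metric.ball_mem_nhds a one_pos) measure_ball_lt_top.ne
      hnφ hlφ hiφ h'iφ hF_int hcg
  have hJΨ : Tendsto (fun t => ∫ x, Ψ t x * F x) l (𝓝 0) := by
    have hcsmall : ∀ᶠ t in l, |c t| < a/2 := by
      have := Metric.tendsto_nhds.mp hL2 (a/2) (by positivity)
      simpa [Real.dist_eq] using this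
    apply squeeze_zero_norm' (a := fun t => ((Real.sqrt (2*Real.pi*(τ - t)))⁻¹ *
      Real.exp (-(a^2/8/(τ - t)))) * ∫ x, ‖F x‖)
    · filter_upwards [self_mem_nhdsWithin, hcsmall] with t ht hct
      have hε : 0 < τ - t := sub_pos.mpr ht.2
      have hSt : 0 ≤ (Real.sqrt (2*Real.pi*(τ - t)))⁻¹ * Real.exp (-(a^2/8/(τ - t))) :=
        mul_nonneg (inv_nonneg.mpr (Real.sqrt_nonneg _)) (Real.exp_pos _).le
      have hpt : ∀ x, ‖Ψ t x * F x‖ ≤ ((Real.sqrt (2*Real.pi*(τ - t)))⁻¹ *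
          Real.exp (-(a^2/8/(τ - t)))) * ‖F x‖ := by
        intro x
        by_cases hx : x ∈ Set.Ioi (0:ℝ)
        · rw [norm_mul]
          apply mul_le_mul_of_nonneg_right _ (norm_nonneg _)
          have hx0 : (0:ℝ) < x := hx
          have hsq : (a/2)^2 ≤ (x + a - c t)^2 := by
            have h1 : a/2 ≤ x + a - c t := by
              have h2 := abs_le.mp hct.le
              linarith [h2.2]
            exact pow_le_pow_left₀ (by positivity) h1 2
          have hexple : -(x + a - c t)^2/(2*(τ - t)) ≤ -(a^2/8/(τ - t)) := by
            rw [← sub_nonneg]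
            have hrw : -(a^2/8/(τ - t)) - -(x + a - c t)^2/(2*(τ - t)) =
                ((x + a - c t)^2 - (a/2)^2)/(2*(τ - t)) := by
              field_simp
              ring
            rw [hrw]
            apply div_nonneg (by linarith) (by linarith)
          have hΨnn : 0 ≤ Ψ t x :=
            mul_nonneg (inv_nonneg.mpr (Real.sqrt_nonneg _)) (Real.exp_pos _).le
          rw [Real.norm_of_nonneg hΨnn]
          exact mul_le_mul_of_nonneg_left (Real.exp_le_exp.mpr hexple)
            (inv_nonneg.mpr (Real.sqrt_nonneg _))
        · have hFx : F x = 0 := Set.indicator_of_notMem hx _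
          simp [hFx]
      calc ‖∫ x, Ψ t x * F x‖ ≤ ∫ x, ‖Ψ t x * F x‖ := norm_integral_le_integral_norm _
        _ ≤ ∫ x, ((Real.sqrt (2*Real.pi*(τ - t)))⁻¹ * Real.exp (-(a^2/8/(τ - t)))) * ‖F x‖ :=
            integral_mono_of_nonneg (Eventually.of_forall fun x => norm_nonneg _)
              (hF_int.norm.const_mul _) (Eventually.of_forall hpt)
        _ = ((Real.sqrt (2*Real.pi*(τ - t)))⁻¹ * Real.exp (-(a^2/8/(τ - t)))) * ∫ x, ‖F x‖ :=
            MeasureTheory.integral_const_mul _ _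
    · have h0 := ((aux_sqrt_exp_decay (k := a^2/8) (by positivity)).comp hL1).mul_const
        (∫ x, ‖F x‖)
      simpa using h0
  -- the key identity
  have key : ∀ᶠ t in l, ∫ b in Set.Ioi (0:ℝ), G t a τ b * g b
      = β t * (∫ x, Φ t x • F x) - β t * (∫ x, Ψ t x * F x) := by
    filter_upwards [self_mem_nhdsWithin] with t ht
    have ht0 : 0 ≤ t := ht.1
    have htτ : t < τ := ht.2
    have hε : 0 < τ - t := sub_pos.mpr htτ
    have hst : 0 < s - t := by linarith
    have hsqε : 0 < Real.sqrt (2*Real.pi*(τ - t)) := Real.sqrt_pos.mpr (by positivity)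
    have e1 : Set.EqOn (fun b => G t a τ b * g b)
        (fun b => β t * (Φ t b * (v b * g b)) - β t * (Ψ t b * (v b * g b)))
        (Set.Ioi 0) := by
      intro b hb
      have hb0 : (0:ℝ) < b := hb
      simp only
      rw [hG t a τ b ht0 htτ hτs ha hb0, hH t a τ b ht0 htτ, hφ b (s - τ) hb0 hq,
        hφ a (s - t) ha hst]
      rw [show ((-1 : ℝ)/2 : ℝ) = -((1:ℝ)/2) by norm_num, Real.rpow_neg (by positivity),
        ← Real.sqrt_eq_rpow]
      rw [show (1:ℝ)/2 * (∫ u in t..τ, (deriv f u)^2) - deriv f τ * b + deriv f t * a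
          = (1/2 * A t + deriv f t * a) + -(deriv f τ * b) by simp only [hA]; ring,
        Real.exp_add]
      simp only [hΦdef, hΨdef, hβ, hv, hc, hA]
      ring
    rw [setIntegral_congr_fun measurableSet_Ioi e1]
    have hΦbdd : ∃ C, ∀ x, ‖Φ t x‖ ≤ C := by
      refine ⟨(Real.sqrt (2*Real.pi*(τ - t)))⁻¹, fun x => ?_⟩
      have hnn : 0 ≤ Φ t x :=
        mul_nonneg (inv_nonneg.mpr (Real.sqrt_nonneg _)) (Real.exp_pos _).le
      rw [Real.norm_of_nonneg hnn]
      calc Φ t x ≤ (Real.sqrt (2*Real.pi*(τ - t)))⁻¹ * 1 := by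
            apply mul_le_mul_of_nonneg_left _ (inv_nonneg.mpr (Real.sqrt_nonneg _))
            apply Real.exp_le_one_iff.mpr
            apply div_nonpos_of_nonpos_of_nonneg (neg_nonpos.mpr (sq_nonneg _)) (by linarith)
        _ = (Real.sqrt (2*Real.pi*(τ - t)))⁻¹ := mul_one _
    have hΨbdd : ∃ C, ∀ x, ‖Ψ t x‖ ≤ C := by
      refine ⟨(Real.sqrt (2*Real.pi*(τ - t)))⁻¹, fun x => ?_⟩
      have hnn : 0 ≤ Ψ t x :=
        mul_nonneg (inv_nonneg.mpr (Real.sqrt_nonneg _)) (Real.exp_pos _).le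
      rw [Real.norm_of_nonneg hnn]
      calc Ψ t x ≤ (Real.sqrt (2*Real.pi*(τ - t)))⁻¹ * 1 := by
            apply mul_le_mul_of_nonneg_left _ (inv_nonneg.mpr (Real.sqrt_nonneg _))
            apply Real.exp_le_one_iff.mpr
            apply div_nonpos_of_nonpos_of_nonneg (neg_nonpos.mpr (sq_nonneg _)) (by linarith)
        _ = (Real.sqrt (2*Real.pi*(τ - t)))⁻¹ := mul_one _
    have hΦmeas : AEStronglyMeasurable (Φ t) (volume.restrict (Set.Ioi 0)) :=
      (continuous_const.mul (Real.continuous_exp.comp (by fun_prop))).aestronglyMeasurable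
    have hΨmeas : AEStronglyMeasurable (Ψ t) (volume.restrict (Set.Ioi 0)) :=
      (continuous_const.mul (Real.continuous_exp.comp (by fun_prop))).aestronglyMeasurable
    have hbΦ : IntegrableOn (fun b => Φ t b * (v b * g b)) (Set.Ioi 0) :=
      hvg_int.bdd_mul hΦmeas (ae_of_all _ hΦbdd.choose_spec)
    have hbΨ : IntegrableOn (fun b => Ψ t b * (v b * g b)) (Set.Ioi 0) :=
      hvg_int.bdd_mul hΨmeas (ae_of_all _ hΨbdd.choose_spec)
    have hΦind : ∫ x, Φ t x • F x = ∫ b in Set.Ioi (0:ℝ), Φ t b * (v b * g b) := by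
      rw [← MeasureTheory.integral_indicator measurableSet_Ioi]
      congr 1
      funext x
      by_cases hx : x ∈ Set.Ioi (0:ℝ)
      · simp [hF, Set.indicator_of_mem hx, smul_eq_mul]
      · simp [hF, Set.indicator_of_notMem hx]
    have hΨind : ∫ x, Ψ t x * F x = ∫ b in Set.Ioi (0:ℝ), Ψ t b * (v b * g b) := by
      rw [← MeasureTheory.integral_indicator measurableSet_Ioi]
      congr 1
      funext x
      by_cases hx : x ∈ Set.Ioi (0:ℝ)
      · simp [hF, Set.indicator_of_mem hx]
      · simp [hF, Set.indicator_of_notMem hx]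
    rw [MeasureTheory.integral_sub (hbΦ.const_mul _) (hbΨ.const_mul _),
      MeasureTheory.integral_const_mul, MeasureTheory.integral_const_mul, hΦind, hΨind]
  have hfin : Tendsto (fun t => β t * (∫ x, Φ t x • F x) - β t * (∫ x, Ψ t x * F x)) l
      (𝓝 (g a)) := by
    have h1 := (hβlim.mul hI).sub (hβlim.mul hJΨ)
    have h2 : Real.exp (1/2 * 0 + deriv f τ * a) /
        (a / Real.sqrt (2*Real.pi*(s-τ)^3) * Real.exp (-a^2/(2*(s-τ)))) * (v a * g a) -
        Real.exp (1/2 * 0 + deriv f τ * a) /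
        (a / Real.sqrt (2*Real.pi*(s-τ)^3) * Real.exp (-a^2/(2*(s-τ)))) * 0 = g a := by
      have hQ : 0 < Real.sqrt (2*Real.pi*(s-τ)^3) := Real.sqrt_pos.mpr (by positivity)
      have hE : Real.exp (1/2 * 0 + deriv f τ * a) = Real.exp (deriv f τ * a) := by norm_num
      simp only [hv, hE, mul_zero, sub_zero, Real.exp_neg]
      field_simp
      ring
    rwa [h2] at h1
  exact hfin.congr' (by filter_upwards [key] with t ht using ht.symm)
end
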